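/- arXiv:2306.00336 — 2 statements merged into one kernel-verified Lean document; each statement's English description precedes it below -/
import Mathlib

section
/- Let w be an element of S_infty, let phi be a flag, and let i be in {1,...,n-1}. If a is in BRF_n(w,phi) and e_i(a) is not 0, then e_i(a) is again in BRF_n(w,phi). -/
open MvPolynomial

/-! ### Permutations of ℤ, reduced words -/

/-- The simple transposition `s_i = (i, i+1)` of `ℤ`. -/
def sT (i : ℤ) : Equiv.Perm ℤ := Equiv.swap i (i + 1)

/-- The product `s_{i_1} s_{i_2} ⋯ s_{i_l}` of the simple transpositions indexed by a word. -/
def wordProd (l : List ℤ) : Equiv.Perm ℤ := (l.map sT).prod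

/-- `S_ℤ`: the subgroup of permutations of `ℤ` generated by the simple transpositions. -/
def SZSet : Set (Equiv.Perm ℤ) := {w | ∃ l : List ℤ, wordProd l = w}

/-- `S_∞`: the subgroup generated by `s_i` for `i ≥ 1`. -/
def SinftySet : Set (Equiv.Perm ℤ) :=
  {w | ∃ l : List ℤ, (∀ i ∈ l, 1 ≤ i) ∧ wordProd l = w}

/-- `S_n`: the subgroup generated by `s_i` for `1 ≤ i ≤ n-1`. -/
def SnSet (n : ℕ) : Set (Equiv.Perm ℤ) :=
  {w | ∃ l : List ℤ, (∀ i ∈ l, 1 ≤ i ∧ i < n) ∧ wordProd l = w}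

/-- A reduced word for `w`: a minimal length word whose product is `w`. -/
def IsReducedWord (w : Equiv.Perm ℤ) (l : List ℤ) : Prop :=
  wordProd l = w ∧ ∀ m : List ℤ, wordProd m = w → l.length ≤ m.length

/-- The Coxeter length of `w` (the length of any reduced word for `w`). -/
noncomputable def lenOf (w : Equiv.Perm ℤ) : ℕ :=
  sInf {m | ∃ l : List ℤ, wordProd l = w ∧ l.length = m}

/-- The inversion set `Inv(w) = {(a,b) : a < b, w(a) > w(b)}`. -/
def InvSet (w : Equiv.Perm ℤ) : Set (ℤ × ℤ) := {p | p.1 < p.2 ∧ w p.2 < w p.1}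

/-- The Lehmer code `c_i(w) = #{j : i < j, w(i) > w(j)}`. -/
noncomputable def codeOf (w : Equiv.Perm ℤ) (i : ℤ) : ℕ := {j : ℤ | i < j ∧ w j < w i}.ncard

/-- The Rothe diagram `D(w) = {(i, w(j)) : i < j, w(i) > w(j)}`. -/
def RotheD (w : Equiv.Perm ℤ) : Set (ℤ × ℤ) :=
  {p | ∃ j : ℤ, p.1 < j ∧ w j < w p.1 ∧ p.2 = w j}

/-! ### Primed letters and primed words -/

/-- A primed letter: `(x, false)` denotes the integer `x`, `(x, true)` denotes `x' = x - 1/2`. -/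
abbrev PLetter := ℤ × Bool

/-- Twice the value of a primed letter (so that comparisons agree with `1' < 1 < 2' < 2 < ⋯`). -/
def pval (p : PLetter) : ℤ := 2 * p.1 - (if p.2 then 1 else 0)

/-- A strictly decreasing primed word. -/
def PDec (l : List PLetter) : Prop := l.Pairwise (fun p q => pval q < pval p)

/-- A strictly decreasing integer word. -/
def ZDec (l : List ℤ) : Prop := l.Pairwise (fun x y => y < x)

/-- Remove the primes from a primed word (the "ceiling"). -/
def unprimeW (l : List PLetter) : List ℤ := l.map Prod.fst

/-- Membership in `R⁺(w)`: a primed word whose unprimed form is a reduced word for `w`. -/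
def IsPrimedReducedWord (w : Equiv.Perm ℤ) (l : List PLetter) : Prop :=
  IsReducedWord w (unprimeW l)

/-- The set `Marked(i)` of marked inversions of a primed word. -/
def markedSet (l : List PLetter) : Set (ℤ × ℤ) :=
  {p | ∃ j : Fin l.length, (l.get j).2 = true ∧
        p.1 = wordProd ((l.drop ((j : ℕ) + 1)).reverse.map Prod.fst) (l.get j).1 ∧
        p.2 = wordProd ((l.drop ((j : ℕ) + 1)).reverse.map Prod.fst) ((l.get j).1 + 1)}

/-! ### Factorizations (as sequences of factors) -/

/-- The concatenation of the first `N` factors of a factorization. -/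
def concatP (a : ℕ → List PLetter) (N : ℕ) : List PLetter := ((List.range N).map a).flatten

/-- The concatenation of the first `N` factors of an unprimed factorization. -/
def concatZ (a : ℕ → List ℤ) (N : ℕ) : List ℤ := ((List.range N).map a).flatten

/-- `RF⁺(w, A)`: decreasing primed reduced factorizations of `w` with marked set `A`
(all but finitely many factors empty). -/
def RFplus (w : Equiv.Perm ℤ) (A : Set (ℤ × ℤ)) : Set (ℕ → List PLetter) :=
  {a | (∀ i, PDec (a i)) ∧ ∃ N : ℕ, (∀ m, N ≤ m → a m = []) ∧
        IsPrimedReducedWord w (concatP a N) ∧ markedSet (concatP a N) = A}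

/-- `RF⁺_n(w, A)`: elements of `RF⁺(w, A)` with all factors beyond the first `n` empty. -/
def RFplusN (n : ℕ) (w : Equiv.Perm ℤ) (A : Set (ℤ × ℤ)) : Set (ℕ → List PLetter) :=
  {a | (∀ i, PDec (a i)) ∧ (∀ m, n ≤ m → a m = []) ∧
        IsPrimedReducedWord w (concatP a n) ∧ markedSet (concatP a n) = A}

/-- `RF_n(w)`: unprimed decreasing reduced factorizations of `w` into at most `n` factors. -/
def RFZn (n : ℕ) (w : Equiv.Perm ℤ) : Set (ℕ → List ℤ) :=
  {a | (∀ i, ZDec (a i)) ∧ (∀ m, n ≤ m → a m = []) ∧ IsReducedWord w (concatZ a n)}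

/-- Removing the primes from each factor of a primed factorization. -/
def unprimeF (a : ℕ → List PLetter) : ℕ → List ℤ := fun m => unprimeW (a m)

/-! ### The pairing procedure and crystal operators (primed version) -/

/-- Find the first letter `b` in the (decreasing) list with `⌈b⌉ < c`, removing it. -/
def findPairP (c : ℤ) : List PLetter → Option PLetter × List PLetter
  | [] => (none, [])
  | b :: rest =>
      if b.1 < c then (some b, rest)
      else
        let r := findPairP c rest
        (r.1, b :: r.2)

/-- Iterate the pairing over the letters of `v` from right to left. -/
def pairFoldP (u : List PLetter) (vrev : List PLetter) :
    List (PLetter × PLetter) × List PLetter :=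
  vrev.foldl (fun st c =>
    match findPairP c.1 st.2 with
    | (none, r) => (st.1, r)
    | (some b, r) => ((b, c) :: st.1, r)) ([], u)

/-- The set `pair(u, v)` of paired letters, as a list of pairs. -/
def pairsP (u v : List PLetter) : List (PLetter × PLetter) := (pairFoldP u v.reverse).1

/-- The unpaired letters of `v` (in decreasing order). -/
def unpairedSnd (u v : List PLetter) : List PLetter :=
  v.filter fun c => decide (c ∉ (pairsP u v).map Prod.snd)

/-- The unpaired letters of `u` (in decreasing order). -/
def unpairedFst (u v : List PLetter) : List PLetter :=
  u.filter fun b => decide (b ∉ (pairsP u v).map Prod.fst)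

theorem exists_add_not_mem (L : List ℤ) (x : ℤ) : ∃ q : ℕ, x + q ∉ L := by
  have h : ∃ q : ℕ, ∀ y ∈ L, y < x + q := by
    induction L with
    | nil => exact ⟨1, by simp⟩
    | cons a t ih =>
      obtain ⟨q, hq⟩ := ih
      refine ⟨q + (a - x).toNat + 1, ?_⟩
      intro y hy
      rcases List.mem_cons.mp hy with rfl | h
      · push_cast; omega
      · have := hq y h; push_cast; omega
  obtain ⟨q, hq⟩ := h
  exact ⟨q, fun hmem => lt_irrefl _ (hq _ hmem)⟩

theorem exists_sub_not_mem (L : List ℤ) (x : ℤ) : ∃ q : ℕ, x - q ∉ L := by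
  have h : ∃ q : ℕ, ∀ y ∈ L, x - q < y := by
    induction L with
    | nil => exact ⟨1, by simp⟩
    | cons a t ih =>
      obtain ⟨q, hq⟩ := ih
      refine ⟨q + (x - a).toNat + 1, ?_⟩
      intro y hy
      rcases List.mem_cons.mp hy with rfl | h
      · push_cast; omega
      · have := hq y h; push_cast; omega
  obtain ⟨q, hq⟩ := h
  exact ⟨q, fun hmem => lt_irrefl _ (hq _ hmem)⟩

/-- The minimal `q ∈ ℕ` with `x + q ∉ L`. -/
def qUp (L : List ℤ) (x : ℤ) : ℕ := Nat.find (exists_add_not_mem L x)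

/-- The minimal `q ∈ ℕ` with `x - q ∉ L`. -/
def qDown (L : List ℤ) (x : ℤ) : ℕ := Nat.find (exists_sub_not_mem L x)

/-- Reverse the prime on a primed letter. -/
def toggleP (p : PLetter) : PLetter := (p.1, !p.2)

/-- Toggle the prime on the occurrence of the letter `p` in a primed word. -/
def toggleIn (l : List PLetter) (p : PLetter) : List PLetter :=
  l.map fun q => if q = p then toggleP q else q

/-- Swap the primes on a pair `(b, c)` with `b` in the first word and `c` in the second:
reverse both primes when exactly one of the two letters is primed. -/
def swapPairIn (uv : List PLetter × List PLetter) (bc : PLetter × PLetter) :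
    List PLetter × List PLetter :=
  if bc.1.2 = bc.2.2 then uv else (toggleIn uv.1 bc.1, toggleIn uv.2 bc.2)

/-- Insert a letter into a decreasing primed word at the correct position. -/
def insertDecP (p : PLetter) : List PLetter → List PLetter
  | [] => [p]
  | q :: t => if pval q < pval p then p :: q :: t else q :: insertDecP p t

/-- The raising crystal operator acting on a consecutive pair of factors (primed version). -/
def eStepP (u v : List PLetter) : Option (List PLetter × List PLetter) :=
  match unpairedSnd u v with
  | [] => none
  | x :: _ =>
    let q : ℕ := qUp (unprimeW u) x.1
    let toSwap := (pairsP u v).filter fun bc => decide (x.1 < bc.2.1 ∧ bc.2.1 ≤ x.1 + q)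
    some (toSwap.foldl swapPairIn (insertDecP (x.1 + q, x.2) u, v.erase x))

/-- The lowering crystal operator acting on a consecutive pair of factors (primed version). -/
def fStepP (u v : List PLetter) : Option (List PLetter × List PLetter) :=
  match (unpairedFst u v).getLast? with
  | none => none
  | some y =>
    let q : ℕ := qDown (unprimeW v) y.1
    let toSwap := (pairsP u v).filter fun bc => decide (y.1 - q ≤ bc.1.1 ∧ bc.1.1 < y.1)
    some (toSwap.foldl swapPairIn (u.erase y, insertDecP (y.1 - q, y.2) v))

/-- Apply a two-factor operator at position `(i, i+1)` of a factorization. -/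
def applyAtP (g : List PLetter → List PLetter → Option (List PLetter × List PLetter))
    (i : ℕ) (a : ℕ → List PLetter) : Option (ℕ → List PLetter) :=
  (g (a i) (a (i + 1))).map fun uv =>
    Function.update (Function.update a i uv.1) (i + 1) uv.2

/-- The crystal operator `e` on primed factorizations acting on factors `i, i+1` (0-indexed). -/
def eP (i : ℕ) (a : ℕ → List PLetter) : Option (ℕ → List PLetter) := applyAtP eStepP i a

/-- The crystal operator `f` on primed factorizations acting on factors `i, i+1` (0-indexed). -/
def fP (i : ℕ) (a : ℕ → List PLetter) : Option (ℕ → List PLetter) := applyAtP fStepP i a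

/-! ### Crystal operators (unprimed version) -/

def findPairZ (c : ℤ) : List ℤ → Option ℤ × List ℤ
  | [] => (none, [])
  | b :: rest =>
      if b < c then (some b, rest)
      else
        let r := findPairZ c rest
        (r.1, b :: r.2)

def pairFoldZ (u : List ℤ) (vrev : List ℤ) : List (ℤ × ℤ) × List ℤ :=
  vrev.foldl (fun st c =>
    match findPairZ c st.2 with
    | (none, r) => (st.1, r)
    | (some b, r) => ((b, c) :: st.1, r)) ([], u)

/-- The set `pair(u, v)` for integer words. -/
def pairsZ (u v : List ℤ) : List (ℤ × ℤ) := (pairFoldZ u v.reverse).1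

def insertDecZ (x : ℤ) : List ℤ → List ℤ
  | [] => [x]
  | q :: t => if q < x then x :: q :: t else q :: insertDecZ x t

/-- The raising crystal operator on a consecutive pair of integer factors. -/
def eStepZ (u v : List ℤ) : Option (List ℤ × List ℤ) :=
  match v.filter (fun c => decide (c ∉ (pairsZ u v).map Prod.snd)) with
  | [] => none
  | x :: _ =>
    let q : ℕ := qUp u x
    some (insertDecZ (x + q) u, v.erase x)

/-- The lowering crystal operator on a consecutive pair of integer factors. -/
def fStepZ (u v : List ℤ) : Option (List ℤ × List ℤ) :=
  match (u.filter (fun b => decide (b ∉ (pairsZ u v).map Prod.fst))).getLast? with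
  | none => none
  | some y =>
    let q : ℕ := qDown v y
    some (u.erase y, insertDecZ (y - q) v)

def applyAtZ (g : List ℤ → List ℤ → Option (List ℤ × List ℤ))
    (i : ℕ) (a : ℕ → List ℤ) : Option (ℕ → List ℤ) :=
  (g (a i) (a (i + 1))).map fun uv =>
    Function.update (Function.update a i uv.1) (i + 1) uv.2

/-- The crystal operator `e` acting on factors `i, i+1` (0-indexed) of an integer factorization,
so that `eZ i` is the paper's `e_{i+1}`. -/
def eZ (i : ℕ) (a : ℕ → List ℤ) : Option (ℕ → List ℤ) := applyAtZ eStepZ i a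

/-- The crystal operator `f` acting on factors `i, i+1` (0-indexed). -/
def fZ (i : ℕ) (a : ℕ → List ℤ) : Option (ℕ → List ℤ) := applyAtZ fStepZ i a

/-! ### Coxeter–Knuth equivalence and tableaux -/

/-- One elementary Coxeter–Knuth move. -/
inductive CKStep : List ℤ → List ℤ → Prop
  | acb (u v : List ℤ) {a b c : ℤ} (h1 : a < b) (h2 : b < c) :
      CKStep (u ++ a :: c :: b :: v) (u ++ c :: a :: b :: v)
  | bca (u v : List ℤ) {a b c : ℤ} (h1 : a < b) (h2 : b < c) :
      CKStep (u ++ b :: c :: a :: v) (u ++ b :: a :: c :: v)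
  | braid (u v : List ℤ) {a b : ℤ} (h : b = a + 1 ∨ b = a - 1) :
      CKStep (u ++ a :: b :: a :: v) (u ++ b :: a :: b :: v)

/-- Coxeter–Knuth equivalence. -/
def CKEquiv : List ℤ → List ℤ → Prop := Relation.EqvGen CKStep

/-- A tableau is recorded as its list of rows; its shape is the list of row lengths. -/
def shapeOf (T : List (List ℤ)) : List ℕ := T.map List.length

/-- The row reading word: rows left to right, starting with the last row. -/
def rowword (T : List (List ℤ)) : List ℤ := T.reverse.flatten

/-- The reverse row reading word. -/
def revrow (T : List (List ℤ)) : List ℤ := (rowword T).reverse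

/-- The entry of `T` in row `i`, position `j` within the row (both 0-indexed). -/
def entryOf (T : List (List ℤ)) (i j : ℕ) : ℤ := (T.getD i []).getD j 0

/-- `T` has partition shape: rows nonempty with weakly decreasing lengths. -/
def IsPartShape (T : List (List ℤ)) : Prop :=
  (∀ r ∈ T, r ≠ []) ∧ ∀ i, i + 1 < T.length → (T.getD (i + 1) []).length ≤ (T.getD i []).length

/-- An increasing tableau of partition shape. -/
def IncrTab (T : List (List ℤ)) : Prop :=
  IsPartShape T ∧ (∀ r ∈ T, r.Pairwise (· < ·)) ∧
  ∀ i j, i + 1 < T.length → j < (T.getD (i + 1) []).length → entryOf T i j < entryOf T (i + 1) j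

/-- A decreasing tableau of partition shape. -/
def DecrTab (T : List (List ℤ)) : Prop :=
  IsPartShape T ∧ (∀ r ∈ T, r.Pairwise (fun x y => y < x)) ∧
  ∀ i j, i + 1 < T.length → j < (T.getD (i + 1) []).length → entryOf T (i + 1) j < entryOf T i j

/-! ### Shifted tableaux -/

/-- Strict partition shape: rows nonempty with strictly decreasing lengths.  Row `i`
(0-indexed) of a shifted tableau occupies columns `i, i+1, …`. -/
def IsStrictShape (T : List (List ℤ)) : Prop :=
  (∀ r ∈ T, r ≠ []) ∧ ∀ i, i + 1 < T.length → (T.getD (i + 1) []).length < (T.getD i []).length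

/-- An increasing shifted tableau: rows and columns strictly increase.  In row-list
coordinates, the entry of row `i+1` in within-row position `j` lies in the same column as the
entry of row `i` in within-row position `j+1`. -/
def ShIncrTab (T : List (List ℤ)) : Prop :=
  IsStrictShape T ∧ (∀ r ∈ T, r.Pairwise (· < ·)) ∧
  ∀ i j, i + 1 < T.length → j < (T.getD (i + 1) []).length →
    entryOf T i (j + 1) < entryOf T (i + 1) j

/-- A decreasing shifted tableau. -/
def ShDecrTab (T : List (List ℤ)) : Prop :=
  IsStrictShape T ∧ (∀ r ∈ T, r.Pairwise (fun x y => y < x)) ∧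
  ∀ i j, i + 1 < T.length → j < (T.getD (i + 1) []).length →
    entryOf T (i + 1) j < entryOf T i (j + 1)

/-! ### Young diagrams of partitions given as lists -/

/-- The Young diagram of a partition given as a list of row lengths (1-indexed positions). -/
def YDiagL (lam : List ℕ) : Set (ℤ × ℤ) :=
  {p | 1 ≤ p.1 ∧ 1 ≤ p.2 ∧ p.2 ≤ (lam.getD (p.1 - 1).toNat 0 : ℤ)}

/-- The tableau `T_λ` with entry `i + j - 1` in each box `(i, j)` of `D_λ` (1-indexed). -/
def Tlam (lam : List ℕ) : List (List ℤ) :=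
  lam.mapIdx fun i k => (List.range k).map fun j => ((i + j + 1 : ℕ) : ℤ)

/-! ### Fixed-point-free involutions -/

def fpfFun (i : ℤ) : ℤ := if Even i then i - 1 else i + 1

theorem fpfFun_involutive : Function.Involutive fpfFun := by
  intro i
  simp only [fpfFun, Int.even_iff]
  split <;> split <;> omega

/-- The fixed-point-free involution `1_fpf : i ↦ i - (-1)^i`. -/
def onefpf : Equiv.Perm ℤ :=
  ⟨fpfFun, fpfFun, fpfFun_involutive, fpfFun_involutive⟩

/-- `I^fpf_ℤ`: the `S_ℤ`-conjugation orbit of `1_fpf`. -/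
def IfpfZ : Set (Equiv.Perm ℤ) := {z | ∃ w ∈ SZSet, z = w⁻¹ * onefpf * w}

/-- `I^fpf_∞`: the `S_∞`-conjugation orbit of `1_fpf`. -/
def IfpfInfty : Set (Equiv.Perm ℤ) := {z | ∃ w ∈ SinftySet, z = w⁻¹ * onefpf * w}

/-- `𝒜^Sp(z)`: minimal-length `w ∈ S_ℤ` with `z = w⁻¹ 1_fpf w`. -/
def ASp (z : Equiv.Perm ℤ) : Set (Equiv.Perm ℤ) :=
  {w | w ∈ SZSet ∧ z = w⁻¹ * onefpf * w ∧
       ∀ v ∈ SZSet, z = v⁻¹ * onefpf * v → lenOf w ≤ lenOf v}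

/-- `R^Sp(z)`: the set of fpf-involution words for `z`. -/
def RSp (z : Equiv.Perm ℤ) : Set (List ℤ) := {l | ∃ w ∈ ASp z, IsReducedWord w l}

/-- The fpf-involution code `c^Sp_i(z)`. -/
noncomputable def cSp (z : Equiv.Perm ℤ) (i : ℤ) : ℕ :=
  {j : ℤ | i < j ∧ z j < min i (z i)}.ncard

/-- `RF^Sp_n(z)`: symplectic reduced factorizations into at most `n` decreasing factors. -/
def RFSp (n : ℕ) (z : Equiv.Perm ℤ) : Set (ℕ → List ℤ) :=
  {a | (∀ i, ZDec (a i)) ∧ (∀ m, n ≤ m → a m = []) ∧ concatZ a n ∈ RSp z}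

/-- `BRF^Sp_n(z)`: the bounded (by the standard flag) symplectic reduced factorizations:
every letter `m` of the factor in (0-indexed) position `i` satisfies `m ≥ i + 1`. -/
def BRFSp (n : ℕ) (z : Equiv.Perm ℤ) : Set (ℕ → List ℤ) :=
  {a | a ∈ RFSp n z ∧ ∀ m, ∀ x ∈ a m, (m : ℤ) + 1 ≤ x}

/-! ### Symplectic Coxeter–Knuth equivalence -/

/-- The extra symplectic relations, affecting the first two letters. -/
inductive SpExtra : List ℤ → List ℤ → Prop
  | down (a : ℤ) (t : List ℤ) : SpExtra (a :: (a - 1) :: t) (a :: (a + 1) :: t)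
  | comm (a b : ℤ) (t : List ℤ) (h : a % 2 = b % 2) : SpExtra (a :: b :: t) (b :: a :: t)

/-- Symplectic Coxeter–Knuth equivalence. -/
def SpCKEquiv : List ℤ → List ℤ → Prop :=
  Relation.EqvGen (fun x y => CKStep x y ∨ SpExtra x y)

/-- `half_<(λ)` for a partition given as a list: positive values among `λ_i - i`. -/
def halfLtL (lam : List ℕ) : List ℕ :=
  ((List.range lam.length).map fun k => ((lam.getD k 0 : ℤ) - (k + 1)).toNat).filter
    fun m => decide (0 < m)

/-- The shifted tableau `T^Sp_λ` of shape `half_<(λ)` with entry `i + j` in box `(i,j) ∈ SD_μ`. -/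
def TSpTab (lam : List ℕ) : List (List ℤ) :=
  (halfLtL lam).mapIdx fun k m => (List.range m).map fun t => ((2 * (k + 1) + t : ℕ) : ℤ)

/-- Symmetric partition (list version): the diagram is invariant under transposition. -/
def SymmPartL (lam : List ℕ) : Prop :=
  ∀ p : ℤ × ℤ, p ∈ YDiagL lam ↔ (p.2, p.1) ∈ YDiagL lam

/-- Skew-symmetric partition (list version). -/
def SkewSymmPartL (lam : List ℕ) : Prop :=
  SymmPartL lam ∧ ∀ i : ℤ, (i, i) ∈ YDiagL lam → (i + 1, i + 1) ∉ YDiagL lam →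
    (¬ ∃ mu : List ℕ, mu.Pairwise (· ≥ ·) ∧ YDiagL mu = YDiagL lam ∪ {(i, i + 1)} ∧
        YDiagL mu ≠ YDiagL lam) ∧
    (¬ ∃ mu : List ℕ, mu.Pairwise (· ≥ ·) ∧ YDiagL mu = YDiagL lam \ {(i, i + 1)} ∧
        YDiagL mu ≠ YDiagL lam)

/-! ### Demazure product, orthogonal involution words -/

/-- One step of the Demazure product: multiply by `s_i` on the left if this increases length. -/
noncomputable def demStep (i : ℤ) (x : Equiv.Perm ℤ) : Equiv.Perm ℤ :=
  if lenOf x < lenOf (sT i * x) then sT i * x else x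

/-- The Demazure product of the letters of a word. -/
noncomputable def demWordProd (l : List ℤ) : Equiv.Perm ℤ := l.foldr demStep 1

/-- `𝒜^O(z)`: minimal-length `w` with `z = w⁻¹ ∘ w` (Demazure product). -/
def AO (z : Equiv.Perm ℤ) : Set (Equiv.Perm ℤ) :=
  {w | (∃ l : List ℤ, IsReducedWord w l ∧ demWordProd (l.reverse ++ l) = z) ∧
       ∀ v : Equiv.Perm ℤ, (∃ l : List ℤ, IsReducedWord v l ∧ demWordProd (l.reverse ++ l) = z) →
         lenOf w ≤ lenOf v}

/-- `Cyc(z) = {(a, b) : a < b = z(a)}`. -/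
def CycSet (z : Equiv.Perm ℤ) : Set (ℤ × ℤ) := {p | p.1 < p.2 ∧ z p.1 = p.2}

/-- `R^O(z)`: the set of primed involution words for `z`. -/
def RO (z : Equiv.Perm ℤ) : Set (List PLetter) :=
  {l | ∃ A ⊆ CycSet z, ∃ w ∈ AO z, IsPrimedReducedWord w l ∧ markedSet l = A}

/-- The involution code `c^O_i(z)`. -/
noncomputable def cO (z : Equiv.Perm ℤ) (i : ℤ) : ℕ :=
  {j : ℤ | i < j ∧ z j ≤ min i (z i)}.ncard

/-- `RF^O_n(z)`: orthogonal (primed) reduced factorizations into at most `n` factors. -/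
def RFO (n : ℕ) (z : Equiv.Perm ℤ) : Set (ℕ → List PLetter) :=
  {a | (∀ i, PDec (a i)) ∧ (∀ m, n ≤ m → a m = []) ∧ concatP a n ∈ RO z}

/-- The unprimed image `uRF^O_n(z)` of `RF^O_n(z)`. -/
def uRFO (n : ℕ) (z : Equiv.Perm ℤ) : Set (ℕ → List ℤ) := unprimeF '' RFO n z

/-! ### Primed and orthogonal Coxeter–Knuth equivalence -/

/-- One elementary primed Coxeter–Knuth move. -/
inductive PCKStep : List PLetter → List PLetter → Prop
  | swapACB (u v : List PLetter) {A B C : PLetter} (h1 : A.1 < B.1) (h2 : B.1 < C.1) :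
      PCKStep (u ++ A :: C :: B :: v) (u ++ C :: A :: B :: v)
  | swapBCA (u v : List PLetter) {A B C : PLetter} (h1 : A.1 < B.1) (h2 : B.1 < C.1) :
      PCKStep (u ++ B :: C :: A :: v) (u ++ B :: A :: C :: v)
  | braid00 (u v : List PLetter) {a b : ℤ} (h : b = a + 1 ∨ b = a - 1) :
      PCKStep (u ++ (a, false) :: (b, false) :: (a, false) :: v)
              (u ++ (b, false) :: (a, false) :: (b, false) :: v)
  | braid11 (u v : List PLetter) {a b : ℤ} (h : b = a + 1 ∨ b = a - 1) :
      PCKStep (u ++ (a, true) :: (b, true) :: (a, true) :: v)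
              (u ++ (b, true) :: (a, true) :: (b, true) :: v)
  | mixA (u v : List PLetter) {a b : ℤ} (h : b = a + 1 ∨ b = a - 1) :
      PCKStep (u ++ (a, true) :: (b, false) :: (a, false) :: v)
              (u ++ (b, false) :: (a, false) :: (b, true) :: v)
  | mixB (u v : List PLetter) {a b : ℤ} (h : b = a + 1 ∨ b = a - 1) :
      PCKStep (u ++ (a, false) :: (b, true) :: (a, false) :: v)
              (u ++ (b, false) :: (a, true) :: (b, false) :: v)
  | mixC (u v : List PLetter) {a b : ℤ} (h : b = a + 1 ∨ b = a - 1) :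
      PCKStep (u ++ (a, true) :: (b, true) :: (a, false) :: v)
              (u ++ (b, false) :: (a, true) :: (b, true) :: v)
  | mixD (u v : List PLetter) {a b : ℤ} (h : b = a + 1 ∨ b = a - 1) :
      PCKStep (u ++ (a, true) :: (b, false) :: (a, true) :: v)
              (u ++ (b, true) :: (a, false) :: (b, true) :: v)

/-- The extra orthogonal relations, affecting the first letters of words. -/
inductive OExtra : List PLetter → List PLetter → Prop
  | prime (a : ℤ) (w : List PLetter) : OExtra ((a, false) :: w) ((a, true) :: w)
  | comm00 (a b : ℤ) (w : List PLetter) :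
      OExtra ((a, false) :: (b, false) :: w) ((b, false) :: (a, false) :: w)
  | comm01 (a b : ℤ) (w : List PLetter) :
      OExtra ((a, false) :: (b, true) :: w) ((b, false) :: (a, true) :: w)
  | comm10 (a b : ℤ) (w : List PLetter) :
      OExtra ((a, true) :: (b, false) :: w) ((b, true) :: (a, false) :: w)
  | comm11 (a b : ℤ) (w : List PLetter) :
      OExtra ((a, true) :: (b, true) :: w) ((b, true) :: (a, true) :: w)

/-- Orthogonal Coxeter–Knuth equivalence. -/
def OCKEquiv : List PLetter → List PLetter → Prop :=
  Relation.EqvGen (fun x y => PCKStep x y ∨ OExtra x y)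

/-- Increasing shifted tableau with primed entries: removing the primes yields an increasing
shifted tableau. -/
def ShIncrTabP (T : List (List PLetter)) : Prop := ShIncrTab (T.map unprimeW)

/-- Decreasing shifted tableau with primed entries. -/
def ShDecrTabP (T : List (List PLetter)) : Prop := ShDecrTab (T.map unprimeW)

/-- No primed entries on the main diagonal (the first entry of each row). -/
def DiagUnprimed (T : List (List PLetter)) : Prop :=
  ∀ r ∈ T, ∀ p : PLetter, r.head? = some p → p.2 = false

/-- The row reading word of a primed shifted tableau. -/
def rowwordP (T : List (List PLetter)) : List PLetter := T.reverse.flatten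

/-- The shape of a primed tableau. -/
def shapeOfP (T : List (List PLetter)) : List ℕ := T.map List.length

/-! ### Iterated partial operators -/

def iterOpt {α : Type*} (g : α → Option α) : ℕ → α → Option α
  | 0, a => some a
  | m + 1, a => (g a).bind (iterOpt g m)

/-! ### Weak compositions as functions `ℤ → ℕ` supported on positive integers -/

/-- A weak composition: nonnegative entries indexed by positive integers, finitely supported. -/
def WeakCompF (α : ℤ → ℕ) : Prop :=
  (∀ i ≤ 0, α i = 0) ∧ ∃ N : ℤ, ∀ i, N ≤ i → α i = 0

/-- A partition: a weakly decreasing weak composition. -/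
def IsPartitionFun (lam : ℤ → ℕ) : Prop :=
  WeakCompF lam ∧ ∀ i : ℤ, 1 ≤ i → lam (i + 1) ≤ lam i

/-- `lam` is the decreasing rearrangement `λ(α)` of `α`:
it is a partition with the same part multiplicities. -/
def IsDecRearr (α lam : ℤ → ℕ) : Prop :=
  IsPartitionFun lam ∧ ∀ k : ℕ, 0 < k →
    {i : ℤ | 1 ≤ i ∧ k ≤ α i}.ncard = {i : ℤ | 1 ≤ i ∧ k ≤ lam i}.ncard

/-- The Young diagram of a partition function (1-indexed positions). -/
def YDiag (lam : ℤ → ℕ) : Set (ℤ × ℤ) :=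
  {p | 1 ≤ p.1 ∧ 1 ≤ p.2 ∧ p.2 ≤ (lam p.1 : ℤ)}

/-- Symmetric partition: diagram invariant under transposition. -/
def SymmPartF (lam : ℤ → ℕ) : Prop :=
  IsPartitionFun lam ∧ ∀ p : ℤ × ℤ, p ∈ YDiag lam ↔ (p.2, p.1) ∈ YDiag lam

/-- Skew-symmetric partition. -/
def SkewSymmPartF (lam : ℤ → ℕ) : Prop :=
  SymmPartF lam ∧ ∀ i : ℤ, (i, i) ∈ YDiag lam → (i + 1, i + 1) ∉ YDiag lam →
    (¬ ∃ mu : ℤ → ℕ, IsPartitionFun mu ∧ YDiag mu = YDiag lam ∪ {(i, i + 1)} ∧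
        YDiag mu ≠ YDiag lam) ∧
    (¬ ∃ mu : ℤ → ℕ, IsPartitionFun mu ∧ YDiag mu = YDiag lam \ {(i, i + 1)} ∧
        YDiag mu ≠ YDiag lam)

/-- The Demazure action of a simple transposition on weak compositions:
sort the entries in positions `i, i+1` into weakly increasing order. -/
def sComp (i : ℤ) (β : ℤ → ℕ) : ℤ → ℕ :=
  if β (i + 1) < β i then
    (fun j => if j = i then β (i + 1) else if j = i + 1 then β i else β j)
  else β

/-- The Demazure action of a word on a weak composition (rightmost letter acts first). -/
def demCompAct (l : List ℤ) (β : ℤ → ℕ) : ℤ → ℕ := l.foldr sComp β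

/-- `u = u(α)`: the minimal-length permutation with `α = u ∘ λ(α)` under the Demazure action. -/
def IsUofAlpha (α lam : ℤ → ℕ) (u : Equiv.Perm ℤ) : Prop :=
  u ∈ SinftySet ∧ (∃ l : List ℤ, IsReducedWord u l ∧ demCompAct l lam = α) ∧
  ∀ v ∈ SinftySet, (∃ l : List ℤ, IsReducedWord v l ∧ demCompAct l lam = α) → lenOf u ≤ lenOf v

/-! ### Isobaric divided differences, Schubert polynomials -/

/-- `g = π_i f`, i.e. `(x_i - x_{i+1}) g = x_i f - x_{i+1} (s_i f)`. -/
def IsPiApply (i : ℤ) (f g : MvPolynomial ℤ ℤ) : Prop :=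
  (X i - X (i + 1)) * g = X i * f - X (i + 1) * MvPolynomial.rename (sT i) f

/-- `g = π_{i_1} π_{i_2} ⋯ π_{i_k} f` for the word `l = [i_1, …, i_k]`. -/
inductive IsPiWord : List ℤ → MvPolynomial ℤ ℤ → MvPolynomial ℤ ℤ → Prop
  | nil (f : MvPolynomial ℤ ℤ) : IsPiWord [] f f
  | cons (i : ℤ) (t : List ℤ) (f h g : MvPolynomial ℤ ℤ) :
      IsPiWord t f h → IsPiApply i h g → IsPiWord (i :: t) f g

/-- The dominant monomial `x^λ = ∏_{k=1}^{M} x_k^{λ_k}`. -/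
noncomputable def xpow (lam : ℤ → ℕ) (M : ℕ) : MvPolynomial ℤ ℤ :=
  ∏ k ∈ Finset.range M, (X ((k : ℤ) + 1) : MvPolynomial ℤ ℤ) ^ lam ((k : ℤ) + 1)

/-- The defining axioms of the family of Schubert polynomials `{𝔖_w}_{w ∈ S_∞}`:
`𝔖_w = x^λ` for `w` dominant of shape `λ`, and
`∂_i 𝔖_w = 𝔖_{w s_i}` whenever `w(i) > w(i+1)` (cleared of denominators). -/
def IsSchubertFamily (Sf : Equiv.Perm ℤ → MvPolynomial ℤ ℤ) : Prop :=
  (∀ w ∈ SinftySet, ∀ lam : ℤ → ℕ, IsPartitionFun lam → RotheD w = YDiag lam →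
     ∀ M : ℕ, (∀ i : ℤ, (M : ℤ) < i → lam i = 0) → Sf w = xpow lam M) ∧
  (∀ w ∈ SinftySet, ∀ i : ℤ, 1 ≤ i → w (i + 1) < w i →
     (X i - X (i + 1)) * Sf (w * sT i) = Sf w - MvPolynomial.rename (sT i) (Sf w))

/-- Substituting `x_m = 0` for all `m > n` in a polynomial. -/
noncomputable def restrictVars (n : ℕ) (g : MvPolynomial ℤ ℤ) : MvPolynomial ℤ ℤ :=
  (MvPolynomial.aeval fun m : ℤ => if m ≤ (n : ℤ) then (X m : MvPolynomial ℤ ℤ) else 0) g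

/-! ### Queer crystal operators `ē_1`, `f̄_1`, `σ_i` on symplectic factorizations -/

/-- Insert a letter directly after the first letter of a list. -/
def insertAfterFirst (c : ℤ) : List ℤ → List ℤ
  | [] => [c]
  | x :: t => x :: c :: t

/-- The operator `ē_1` on symplectic reduced factorizations. -/
def e1barOp (a : ℕ → List ℤ) : Option (ℕ → List ℤ) :=
  match a 1 with
  | [] => none
  | y :: s =>
    if ∀ x ∈ a 0, x < y then
      if Even y then
        some (Function.update (Function.update a 1 s) 0 (y :: a 0))
      else
        some (Function.update (Function.update a 1 s) 0 (insertAfterFirst (y - 2) (a 0)))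
    else none

/-- The operator `f̄_1` on symplectic reduced factorizations. -/
def f1barOp (a : ℕ → List ℤ) : Option (ℕ → List ℤ) :=
  match a 0 with
  | [] => none
  | x :: _ =>
    if ∀ y ∈ a 1, y < x then
      if (x - 1) ∈ a 0 then
        some (Function.update (Function.update a 0 ((a 0).erase (x - 1))) 1 ((x + 1) :: a 1))
      else
        some (Function.update (Function.update a 0 ((a 0).erase x)) 1 (x :: a 1))
    else none

/-- The string-reversing operator `σ` acting on factors `i, i+1` (0-indexed):
apply `f^k` where `k = wt_i - wt_{i+1}` if `k ≥ 0`, and `e^{-k}` otherwise. -/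
def sigZ (i : ℕ) (a : ℕ → List ℤ) : Option (ℕ → List ℤ) :=
  if (a (i + 1)).length ≤ (a i).length then
    iterOpt (fZ i) ((a i).length - (a (i + 1)).length) a
  else
    iterOpt (eZ i) ((a (i + 1)).length - (a i).length) a

/-- The operators `ē_{j+1}` (0-indexed `j`), defined by
`ē_i = σ_{i-1} σ_i ē_{i-1} σ_i σ_{i-1}`. -/
def ebarOp : ℕ → (ℕ → List ℤ) → Option (ℕ → List ℤ)
  | 0 => e1barOp
  | j + 1 => fun a =>
      (sigZ j a).bind fun b => (sigZ (j + 1) b).bind fun c =>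
        (ebarOp j c).bind fun d => (sigZ (j + 1) d).bind (sigZ j)

/-- The operators `f̄_{j+1}` (0-indexed `j`). -/
def fbarOp : ℕ → (ℕ → List ℤ) → Option (ℕ → List ℤ)
  | 0 => f1barOp
  | j + 1 => fun a =>
      (sigZ j a).bind fun b => (sigZ (j + 1) b).bind fun c =>
        (fbarOp j c).bind fun d => (sigZ (j + 1) d).bind (sigZ j)

/-! ### Crystal Demazure operators on symplectic factorizations -/

/-- The crystal Demazure operator `𝔇_i` (paper-indexed `i ∈ [n-1]`) inside the ambient
crystal `RF^Sp_n(z)`:  all `b` with `e_i^m(b) ∈ X` for some `m ∈ ℕ`. -/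
def DOpSp (n : ℕ) (z : Equiv.Perm ℤ) (i : ℤ) (Xs : Set (ℕ → List ℤ)) : Set (ℕ → List ℤ) :=
  {b | b ∈ RFSp n z ∧ ∃ m : ℕ, ∃ b', iterOpt (eZ (i - 1).toNat) m b = some b' ∧ b' ∈ Xs}

/-- `𝔇_{i_1} 𝔇_{i_2} ⋯ 𝔇_{i_k} X` for the word `l = [i_1, …, i_k]`. -/
def DemFoldSp (n : ℕ) (z : Equiv.Perm ℤ) (l : List ℤ) (Xs : Set (ℕ → List ℤ)) :
    Set (ℕ → List ℤ) :=
  l.foldr (fun i Y => DOpSp n z i Y) Xs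
/-- `RF_n(w)` for `w ∈ S_∞`: factorizations into strictly decreasing words of positive
integers. -/
def RFposZn (n : ℕ) (w : Equiv.Perm ℤ) : Set (ℕ → List ℤ) :=
  {a | (∀ i, ZDec (a i)) ∧ (∀ i, ∀ x ∈ a i, 1 ≤ x) ∧ (∀ m, n ≤ m → a m = []) ∧
       IsReducedWord w (concatZ a n)}


/-! ### Auxiliary development -/

namespace EZAux

theorem sT_apply (c k : ℤ) : sT c k = if k = c then c + 1 else if k = c + 1 then c else k := by
  simp [sT, Equiv.swap_apply_def]

theorem sT_apply_of_ne (c k : ℤ) (h1 : k ≠ c) (h2 : k ≠ c + 1) : sT c k = k := by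
  rw [sT_apply]; simp [h1, h2]

theorem sT_apply_self (c : ℤ) : sT c c = c + 1 := by rw [sT_apply]; simp

theorem wordProd_nil : wordProd [] = 1 := rfl

theorem wordProd_cons (c : ℤ) (t : List ℤ) : wordProd (c :: t) = sT c * wordProd t := by
  simp [wordProd]

theorem wordProd_append (l₁ l₂ : List ℤ) :
    wordProd (l₁ ++ l₂) = wordProd l₁ * wordProd l₂ := by
  simp [wordProd]

theorem wordProd_singleton (c : ℤ) : wordProd [c] = sT c := by
  simp [wordProd]

theorem ZDec_cons_iff {c : ℤ} {t : List ℤ} :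
    ZDec (c :: t) ↔ (∀ y ∈ t, y < c) ∧ ZDec t := by
  constructor
  · intro h; exact ⟨fun y hy => List.rel_of_pairwise_cons h hy, h.of_cons⟩
  · intro h; exact List.pairwise_cons.mpr ⟨h.1, h.2⟩

/-- Evaluation of a decreasing word at a point `m` which starts an upward run. -/
theorem evalUp (l : List ℤ) (hl : ZDec l) (m : ℤ) (k : ℕ)
    (hmem : ∀ j : ℕ, j < k → m + j ∈ l) (htop : m + k ∉ l) (hlow : m - 1 ∉ l) :
    wordProd l m = m + k := by
  induction l generalizing k with
  | nil =>
    cases k with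
    | zero => simp [wordProd_nil]
    | succ k => exact absurd (hmem 0 (Nat.succ_pos k)) (List.not_mem_nil)
  | cons c t ih =>
    obtain ⟨hct, ht⟩ := ZDec_cons_iff.mp hl
    have hlow' : m - 1 ∉ t := fun hh => hlow (List.mem_cons_of_mem _ hh)
    rw [wordProd_cons, Equiv.Perm.mul_apply]
    by_cases hc1 : c = m + (k : ℤ)
    · exact absurd (by rw [← hc1]; exact List.mem_cons_self : m + (k:ℤ) ∈ c :: t) htop
    by_cases hc2 : m + (k : ℤ) < c
    · have hres : wordProd t m = m + k := by
        refine ih ht k (fun j hj => ?_) (fun hh => ?_) hlow'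
        · rcases List.mem_cons.mp (hmem j hj) with h | h
          · exfalso; omega
          · exact h
        · exact htop (List.mem_cons_of_mem _ hh)
      rw [hres]
      exact sT_apply_of_ne c _ (by omega) (by omega)
    · have hc3 : c < m + (k : ℤ) := by omega
      cases k with
      | zero =>
        have hcm : c ≠ m - 1 := fun hh => hlow (by rw [← hh]; exact List.mem_cons_self)
        have hres : wordProd t m = m + ((0:ℕ) : ℤ) := by
          refine ih ht 0 (fun j hj => absurd hj (Nat.not_lt_zero j)) (fun hh => ?_) hlow'
          exact htop (List.mem_cons_of_mem _ hh)
        rw [hres]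
        refine sT_apply_of_ne c _ (by push_cast at hc3 ⊢; omega) (by push_cast at hc3 ⊢; omega)
      | succ k =>
        have hmk : m + (k:ℤ) ∈ c :: t := hmem k (by omega)
        have hceq : c = m + (k:ℤ) := by
          rcases List.mem_cons.mp hmk with h | h
          · omega
          · exfalso; have := hct _ h; push_cast at hc3; omega
        have hres : wordProd t m = m + (k : ℤ) := by
          refine ih ht k (fun j hj => ?_) (fun hh => ?_) hlow'
          · rcases List.mem_cons.mp (hmem j (by omega)) with h | h
            · exfalso; omega
            · exact h
          · exfalso; have := hct _ hh; omega
        rw [hres, hceq, sT_apply_self]; push_cast; ring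

theorem evalFix (l : List ℤ) (hl : ZDec l) (m : ℤ) (h1 : m ∉ l) (h2 : m - 1 ∉ l) :
    wordProd l m = m := by
  have := evalUp l hl m 0 (fun j hj => absurd hj (Nat.not_lt_zero j)) (by simpa using h1) h2
  simpa using this

theorem evalDown (l : List ℤ) (hl : ZDec l) (m : ℤ) (h : m - 1 ∈ l) :
    wordProd l m = m - 1 := by
  induction l with
  | nil => simp at h
  | cons c t ih =>
    obtain ⟨hct, ht⟩ := ZDec_cons_iff.mp hl
    rw [wordProd_cons, Equiv.Perm.mul_apply]
    rcases List.mem_cons.mp h with h1 | h1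
    · have h2 : wordProd t m = m := by
        refine evalFix t ht m (fun hm => ?_) (fun hm => ?_)
        · have := hct _ hm; omega
        · have := hct _ hm; rw [← h1] at this; omega
      rw [h2, ← h1, sT_apply]; simp
    · have hcm : m - 1 < c := hct _ h1
      rw [ih ht h1]
      exact sT_apply_of_ne c (m-1) (by omega) (by omega)

theorem qUp_not_mem (L : List ℤ) (x : ℤ) : x + (qUp L x : ℤ) ∉ L :=
  Nat.find_spec (exists_add_not_mem L x)

theorem qUp_mem (L : List ℤ) (x : ℤ) {j : ℕ} (hj : j < qUp L x) : x + (j : ℤ) ∈ L := by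
  by_contra hmem
  exact absurd (Nat.find_min (exists_add_not_mem L x) hj) (by simp [hmem])

end EZAux

namespace EZAux

/-! ### Bounded support -/

theorem _root_.Equiv.Perm.apply_inv_self (f : Equiv.Perm ℤ) (x : ℤ) : f (f⁻¹ x) = x :=
  f.apply_symm_apply x

theorem _root_.Equiv.Perm.inv_apply_self (f : Equiv.Perm ℤ) (x : ℤ) : f⁻¹ (f x) = x :=
  f.symm_apply_apply x

def BddS (w : Equiv.Perm ℤ) : Prop := ∃ M : ℤ, 0 ≤ M ∧ ∀ k : ℤ, (k < -M ∨ M < k) → w k = k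

theorem bddS_one : BddS 1 := ⟨0, le_refl 0, fun k _ => rfl⟩

theorem bddS_sT (c : ℤ) : BddS (sT c) := by
  refine ⟨|c| + 1, by positivity, fun k hk => ?_⟩
  have h1 : c ≤ |c| := le_abs_self c
  have h2 : -|c| ≤ c := neg_abs_le c
  exact sT_apply_of_ne c k (by omega) (by omega)

theorem bddS_mul {w v : Equiv.Perm ℤ} (hw : BddS w) (hv : BddS v) : BddS (w * v) := by
  obtain ⟨M, hM0, hM⟩ := hw
  obtain ⟨N, hN0, hN⟩ := hv
  refine ⟨max M N, le_max_of_le_left hM0, fun k hk => ?_⟩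
  have hM' : M ≤ max M N := le_max_left M N
  have hN' : N ≤ max M N := le_max_right M N
  have h1 : v k = k := hN k (by omega)
  rw [Equiv.Perm.mul_apply, h1]
  exact hM k (by omega)

theorem bddS_inv {w : Equiv.Perm ℤ} (hw : BddS w) : BddS w⁻¹ := by
  obtain ⟨M, hM0, hM⟩ := hw
  refine ⟨M, hM0, fun k hk => ?_⟩
  have := hM k hk
  calc w⁻¹ k = w⁻¹ (w k) := by rw [this]
  _ = k := Equiv.Perm.inv_apply_self w k

theorem bddS_wordProd (l : List ℤ) : BddS (wordProd l) := by
  induction l with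
  | nil => exact bddS_one
  | cons c t ih => rw [wordProd_cons]; exact bddS_mul (bddS_sT c) ih

/-! ### Inversions -/

noncomputable def invN (w : Equiv.Perm ℤ) : ℕ := (InvSet w).ncard

theorem mem_invSet {w : Equiv.Perm ℤ} {a b : ℤ} :
    (a, b) ∈ InvSet w ↔ a < b ∧ w b < w a := Iff.rfl

theorem invSet_finite {w : Equiv.Perm ℤ} (h : BddS w) : (InvSet w).Finite := by
  obtain ⟨M, hM0, hM⟩ := h
  have hbox : ∀ j : ℤ, -M ≤ j → j ≤ M → -M ≤ w j ∧ w j ≤ M := by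
    intro j h1 h2
    by_contra hc
    have : w j < -M ∨ M < w j := by omega
    have h3 : w (w j) = w j := hM _ (by omega)
    have h4 : w j = j := w.injective h3
    omega
  apply Set.Finite.subset ((Set.finite_Icc (-M) M).prod (Set.finite_Icc (-M) M))
  rintro ⟨a, b⟩ hp
  rw [mem_invSet] at hp
  obtain ⟨hab, hw⟩ := hp
  simp only [Set.mem_prod, Set.mem_Icc]
  -- first: a ≥ -M
  have ha1 : -M ≤ a := by
    by_contra hc
    have hwa : w a = a := hM a (by omega)
    have hwb : w (w b) = w b := hM _ (by omega)
    have : w b = b := w.injective hwb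
    omega
  have hb2 : b ≤ M := by
    by_contra hc
    have hwb : w b = b := hM b (by omega)
    have hwa : w (w a) = w a := hM _ (by omega)
    have : w a = a := w.injective hwa
    omega
  exact ⟨⟨ha1, by omega⟩, by omega, hb2⟩

theorem sT_lt_iff (c p q : ℤ) :
    sT c p < sT c q ↔ ((p < q ∧ ¬(p = c ∧ q = c + 1)) ∨ (p = c + 1 ∧ q = c)) := by
  rw [sT_apply, sT_apply]
  split_ifs <;> omega

theorem invSet_sT_mul_lt {w : Equiv.Perm ℤ} {c : ℤ} (h : w⁻¹ c < w⁻¹ (c + 1)) :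
    InvSet (sT c * w) = insert (w⁻¹ c, w⁻¹ (c + 1)) (InvSet w) ∧
      (w⁻¹ c, w⁻¹ (c + 1)) ∉ InvSet w := by
  constructor
  · ext ⟨a, b⟩
    simp only [mem_invSet, Set.mem_insert_iff, Prod.mk.injEq, Equiv.Perm.mul_apply]
    rw [sT_lt_iff]
    constructor
    · rintro ⟨hab, ⟨h1, _⟩ | ⟨h1, h2⟩⟩
      · exact Or.inr ⟨hab, h1⟩
      · left
        constructor
        · rw [← h2]; rw [Equiv.Perm.inv_apply_self]
        · rw [← h1]; rw [Equiv.Perm.inv_apply_self]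
    · rintro (⟨ha, hb⟩ | ⟨hab, hw⟩)
      · subst ha; subst hb
        refine ⟨h, Or.inr ⟨?_, ?_⟩⟩ <;> rw [Equiv.Perm.apply_inv_self]
      · refine ⟨hab, Or.inl ⟨hw, ?_⟩⟩
        rintro ⟨h1, h2⟩
        have hb' : b = w⁻¹ c := by rw [← h1, Equiv.Perm.inv_apply_self]
        have ha' : a = w⁻¹ (c + 1) := by rw [← h2, Equiv.Perm.inv_apply_self]
        omega
  · rintro ⟨_, hw⟩
    rw [Equiv.Perm.apply_inv_self, Equiv.Perm.apply_inv_self] at hw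
    omega

theorem invSet_sT_mul_gt {w : Equiv.Perm ℤ} {c : ℤ} (h : w⁻¹ (c + 1) < w⁻¹ c) :
    InvSet (sT c * w) = InvSet w \ {(w⁻¹ (c + 1), w⁻¹ c)} ∧
      (w⁻¹ (c + 1), w⁻¹ c) ∈ InvSet w := by
  constructor
  · ext ⟨a, b⟩
    simp only [mem_invSet, Set.mem_diff, Set.mem_singleton_iff, Prod.mk.injEq,
      Equiv.Perm.mul_apply]
    rw [sT_lt_iff]
    constructor
    · rintro ⟨hab, ⟨h1, h2⟩ | ⟨h1, h2⟩⟩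
      · refine ⟨⟨hab, h1⟩, ?_⟩
        rintro ⟨ha, hb⟩
        exact h2 ⟨by rw [hb, Equiv.Perm.apply_inv_self], by rw [ha, Equiv.Perm.apply_inv_self]⟩
      · exfalso
        have hb' : b = w⁻¹ (c + 1) := by rw [← h1, Equiv.Perm.inv_apply_self]
        have ha' : a = w⁻¹ c := by rw [← h2, Equiv.Perm.inv_apply_self]
        omega
    · rintro ⟨⟨hab, hw⟩, hne⟩
      refine ⟨hab, Or.inl ⟨hw, ?_⟩⟩
      rintro ⟨h1, h2⟩
      exact hne ⟨by rw [← h2, Equiv.Perm.inv_apply_self], by rw [← h1, Equiv.Perm.inv_apply_self]⟩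
  · exact ⟨h, by rw [Equiv.Perm.apply_inv_self, Equiv.Perm.apply_inv_self]; omega⟩

theorem invN_sT_mul_lt {w : Equiv.Perm ℤ} {c : ℤ} (hfin : (InvSet w).Finite)
    (h : w⁻¹ c < w⁻¹ (c + 1)) :
    invN (sT c * w) = invN w + 1 ∧ (InvSet (sT c * w)).Finite := by
  obtain ⟨hset, hmem⟩ := invSet_sT_mul_lt h
  rw [invN, invN, hset]
  exact ⟨Set.ncard_insert_of_notMem hmem hfin, hfin.insert _⟩

theorem invN_sT_mul_gt {w : Equiv.Perm ℤ} {c : ℤ} (hfin : (InvSet w).Finite)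
    (h : w⁻¹ (c + 1) < w⁻¹ c) :
    invN (sT c * w) = invN w - 1 ∧ 1 ≤ invN w ∧ (InvSet (sT c * w)).Finite := by
  obtain ⟨hset, hmem⟩ := invSet_sT_mul_gt h
  rw [invN, invN, hset]
  refine ⟨Set.ncard_diff_singleton_of_mem hmem, ?_, hfin.diff⟩
  have := (Set.ncard_pos hfin).mpr ⟨_, hmem⟩
  omega

theorem invSet_inv_eq (w : Equiv.Perm ℤ) :
    InvSet w⁻¹ = (fun p : ℤ × ℤ => (w p.2, w p.1)) '' InvSet w := by
  ext ⟨a, b⟩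
  simp only [InvSet, Set.mem_setOf_eq, Set.mem_image, Prod.mk.injEq, Prod.exists]
  constructor
  · rintro ⟨hab, hw⟩
    refine ⟨w⁻¹ b, w⁻¹ a, ⟨hw, ?_⟩, ?_, ?_⟩
    · rw [Equiv.Perm.apply_inv_self, Equiv.Perm.apply_inv_self]; exact hab
    · rw [Equiv.Perm.apply_inv_self]
    · rw [Equiv.Perm.apply_inv_self]
  · rintro ⟨p, q, ⟨hpq, hw⟩, ha, hb⟩
    subst ha; subst hb
    exact ⟨hw, by rw [Equiv.Perm.inv_apply_self, Equiv.Perm.inv_apply_self]; exact hpq⟩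

theorem swapPair_injective (w : Equiv.Perm ℤ) :
    Function.Injective (fun p : ℤ × ℤ => (w p.2, w p.1)) := by
  rintro ⟨a, b⟩ ⟨c, d⟩ h
  simp only [Prod.mk.injEq] at h
  exact Prod.ext (w.injective h.2) (w.injective h.1)

theorem invN_inv (w : Equiv.Perm ℤ) : invN w⁻¹ = invN w := by
  rw [invN, invN, invSet_inv_eq, Set.ncard_image_of_injective _ (swapPair_injective w)]

theorem invSet_inv_finite {w : Equiv.Perm ℤ} (h : (InvSet w).Finite) :
    (InvSet w⁻¹).Finite := by
  rw [invSet_inv_eq]; exact h.image _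

theorem invN_wordProd_le (l : List ℤ) : invN (wordProd l) ≤ l.length := by
  induction l with
  | nil =>
    have : InvSet (wordProd []) = ∅ := by
      ext ⟨a, b⟩; simp [wordProd_nil, mem_invSet]; omega
    simp [invN, this]
  | cons c t ih =>
    rw [wordProd_cons]
    set w := wordProd t
    have hfin : (InvSet w).Finite := invSet_finite (bddS_wordProd t)
    rcases lt_trichotomy (w⁻¹ c) (w⁻¹ (c + 1)) with h | h | h
    · have := (invN_sT_mul_lt hfin h).1
      simp only [List.length_cons]; omega
    · exact absurd (w⁻¹.injective h) (by omega)
    · have := (invN_sT_mul_gt hfin h).1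
      simp only [List.length_cons]; omega

theorem strictMono_eq_one {w : Equiv.Perm ℤ} (hb : BddS w) (hm : StrictMono (w : ℤ → ℤ)) :
    w = 1 := by
  have key : ∀ (a : ℤ) (k : ℕ), w a + k ≤ w (a + k) := by
    intro a k
    induction k with
    | zero => simp
    | succ k ih =>
      have h1 : w (a + k) < w (a + k + 1) := hm (by omega)
      push_cast
      rw [show a + ((k : ℤ) + 1) = a + (k : ℤ) + 1 by ring]
      push_cast at ih
      omega
  obtain ⟨M, hM0, hfix⟩ := hb
  ext a
  by_cases ha : a < -M ∨ M < a
  · simp [hfix a ha]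
  · push_neg at ha
    have h1 : w (M + 1) = M + 1 := hfix _ (by omega)
    have h2 : w (-M - 1) = -M - 1 := hfix _ (by omega)
    have k1 : w a + ((M + 1 - a).toNat : ℤ) ≤ w (a + (M + 1 - a).toNat) := key a _
    have k2 : w (-M - 1) + ((a + M + 1).toNat : ℤ) ≤ w (-M - 1 + (a + M + 1).toNat) := key _ _
    rw [Int.toNat_of_nonneg (by omega)] at k1 k2
    have e1 : a + (M + 1 - a) = M + 1 := by ring
    have e2 : -M - 1 + (a + M + 1) = a := by ring
    rw [e1, h1] at k1
    rw [e2, h2] at k2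
    simp only [Equiv.Perm.one_apply]
    omega

theorem invSet_one : InvSet (1 : Equiv.Perm ℤ) = ∅ := by
  ext ⟨a, b⟩; simp [mem_invSet]; omega

theorem exists_word_of_invN (n : ℕ) :
    ∀ w : Equiv.Perm ℤ, BddS w → invN w = n → ∃ l : List ℤ, wordProd l = w ∧ l.length = n := by
  induction n using Nat.strong_induction_on with
  | _ n ih =>
    intro w hb hn
    cases n with
    | zero =>
      have hfin := invSet_finite hb
      have hempty : InvSet w = ∅ := (Set.ncard_eq_zero hfin).mp hn
      have hmono : StrictMono (w : ℤ → ℤ) := by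
        apply strictMono_int_of_lt_succ
        intro a
        have hnotmem : (a, a + 1) ∉ InvSet w := by rw [hempty]; exact Set.notMem_empty _
        rw [mem_invSet] at hnotmem
        push_neg at hnotmem
        have h1 : ¬ w (a + 1) < w a := by
          intro hc; exact absurd (hnotmem (by omega)) (by omega)
        have h2 : w a ≠ w (a + 1) := fun hc => by have := w.injective hc; omega
        omega
      exact ⟨[], by rw [wordProd_nil, strictMono_eq_one hb hmono], rfl⟩
    | succ n' =>
      have hfin := invSet_finite hb
      have hdesc : ∃ c : ℤ, w⁻¹ (c + 1) < w⁻¹ c := by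
        by_contra hno
        push_neg at hno
        have hmono : StrictMono ((w⁻¹ : Equiv.Perm ℤ) : ℤ → ℤ) := by
          apply strictMono_int_of_lt_succ
          intro a
          have h2 : w⁻¹ a ≠ w⁻¹ (a + 1) := fun hc => by have := w⁻¹.injective hc; omega
          have := hno a
          omega
        have : w⁻¹ = 1 := strictMono_eq_one (bddS_inv hb) hmono
        have hw1 : w = 1 := by rw [← inv_inv w, this, inv_one]
        rw [hw1, invN, invSet_one] at hn
        simp at hn
      obtain ⟨c, hc⟩ := hdesc
      obtain ⟨hcard, hpos, hfin'⟩ := invN_sT_mul_gt hfin hc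
      have hbs : BddS (sT c * w) := bddS_mul (bddS_sT c) hb
      have hn' : invN (sT c * w) = n' := by omega
      obtain ⟨l, hl, hlen⟩ := ih n' (by omega) (sT c * w) hbs hn'
      refine ⟨c :: l, ?_, by simp [hlen]⟩
      rw [wordProd_cons, hl, ← mul_assoc]
      have hss : sT c * sT c = 1 := Equiv.swap_mul_self _ _
      simp [hss]

theorem isReduced_iff {w : Equiv.Perm ℤ} {l : List ℤ} (hprod : wordProd l = w) :
    IsReducedWord w l ↔ l.length = invN w := by
  constructor
  · intro hr
    obtain ⟨l₀, hl₀, hlen₀⟩ := exists_word_of_invN (invN w) w (hprod ▸ bddS_wordProd l) rfl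
    have h1 : l.length ≤ invN w := hlen₀ ▸ hr.2 l₀ hl₀
    have h2 : invN w ≤ l.length := hprod ▸ invN_wordProd_le l
    omega
  · intro hl
    refine ⟨hprod, fun m hm => ?_⟩
    have := invN_wordProd_le m
    rw [hm] at this
    omega

theorem reduced_infix {w : Equiv.Perm ℤ} {l₁ m l₂ : List ℤ}
    (h : IsReducedWord w (l₁ ++ m ++ l₂)) : IsReducedWord (wordProd m) m := by
  obtain ⟨a₁, ha₁, hlen₁⟩ := exists_word_of_invN _ (wordProd l₁) (bddS_wordProd l₁) rfl
  obtain ⟨a₂, ha₂, hlen₂⟩ := exists_word_of_invN _ (wordProd m) (bddS_wordProd m) rfl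
  obtain ⟨a₃, ha₃, hlen₃⟩ := exists_word_of_invN _ (wordProd l₂) (bddS_wordProd l₂) rfl
  have hprod : wordProd (a₁ ++ a₂ ++ a₃) = w := by
    rw [wordProd_append, wordProd_append, ha₁, ha₂, ha₃, ← h.1,
      wordProd_append, wordProd_append]
  have hmin := h.2 _ hprod
  simp only [List.length_append] at hmin
  have hle : invN (wordProd m) ≤ m.length := invN_wordProd_le m
  have h1 : invN (wordProd l₁) ≤ l₁.length := invN_wordProd_le l₁
  have h3 : invN (wordProd l₂) ≤ l₂.length := invN_wordProd_le l₂
  rw [isReduced_iff rfl]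
  omega

theorem reduced_snoc {m : List ℤ} {c : ℤ}
    (h : IsReducedWord (wordProd (m ++ [c])) (m ++ [c])) :
    wordProd m c < wordProd m (c + 1) := by
  set τ := wordProd m with hτ
  have hmred : IsReducedWord τ m := by
    have := reduced_infix (l₁ := []) (m := m) (l₂ := [c]) (by simpa using h)
    exact this
  have hNm : m.length = invN τ := (isReduced_iff rfl).mp hmred
  have hNmc : m.length + 1 = invN (wordProd (m ++ [c])) := by
    have := (isReduced_iff rfl).mp h
    simpa using this
  by_contra hlt
  push_neg at hlt
  have hne : τ (c + 1) ≠ τ c := fun hh => by have := τ.injective hh; omega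
  have hlt' : τ (c + 1) < τ c := lt_of_le_of_ne hlt hne
  have hinv : (wordProd (m ++ [c]))⁻¹ = sT c * τ⁻¹ := by
    rw [wordProd_append, wordProd_singleton, mul_inv_rev,
      show (sT c)⁻¹ = sT c from Equiv.swap_inv c (c + 1)]
  have hfin : (InvSet τ⁻¹).Finite := invSet_inv_finite (invSet_finite (bddS_wordProd m))
  have hcond : (τ⁻¹)⁻¹ (c + 1) < (τ⁻¹)⁻¹ c := by simpa using hlt'
  obtain ⟨hcard, hpos, _⟩ := invN_sT_mul_gt hfin hcond
  have h1 : invN (wordProd (m ++ [c])) = invN (sT c * τ⁻¹) := by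
    rw [← hinv, invN_inv]
  rw [invN_inv] at hcard hpos
  omega

end EZAux

namespace EZAux

/-! ### Decreasing runs and list decompositions -/

def runD (b : ℤ) : ℕ → List ℤ
  | 0 => []
  | k + 1 => (b + k) :: runD b k

theorem mem_runD {b y : ℤ} {k : ℕ} : y ∈ runD b k ↔ b ≤ y ∧ y < b + k := by
  induction k with
  | zero => simp [runD]
  | succ k ih =>
    simp only [runD, List.mem_cons, ih]
    push_cast
    omega

theorem ZDec_runD (b : ℤ) (k : ℕ) : ZDec (runD b k) := by
  induction k with
  | zero => exact List.Pairwise.nil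
  | succ k ih =>
    refine List.pairwise_cons.mpr ⟨fun y hy => ?_, ih⟩
    rw [mem_runD] at hy
    push_cast
    omega

theorem runD_succ_eq (b : ℤ) (k : ℕ) : runD b (k + 1) = runD (b + 1) k ++ [b] := by
  induction k with
  | zero => simp [runD]
  | succ k ih =>
    have h1 : runD b (k + 2) = (b + (k+1 : ℕ)) :: runD b (k + 1) := rfl
    rw [h1, ih]
    have h2 : runD (b + 1) (k + 1) = ((b + 1) + (k : ℕ)) :: runD (b + 1) k := rfl
    rw [h2]
    have : b + ((k+1 : ℕ) : ℤ) = (b + 1) + (k : ℕ) := by push_cast; ring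
    rw [this]
    rfl

theorem split_filter (l : List ℤ) (hl : ZDec l) (T : ℤ) :
    l = l.filter (fun c => decide (T < c)) ++ l.filter (fun c => decide (c ≤ T)) := by
  induction l with
  | nil => rfl
  | cons c t ih =>
    obtain ⟨hct, ht⟩ := ZDec_cons_iff.mp hl
    by_cases hc : T < c
    · have hnc : ¬ (c ≤ T) := by omega
      simp only [List.filter_cons]
      rw [if_pos (by simpa using hc), if_neg (by simpa using hnc)]
      rw [List.cons_append]
      exact congrArg (c :: ·) (ih ht)
    · have hcT : c ≤ T := by omega
      have h1 : t.filter (fun c => decide (T < c)) = [] := by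
        apply List.filter_eq_nil_iff.mpr
        intro y hy
        have := hct y hy
        simp only [decide_eq_true_eq]
        omega
      have h2 : (c :: t).filter (fun c => decide (T < c)) = [] := by
        simp only [List.filter_cons]
        have : ¬ (T < c) := by omega
        simp [this, h1]
      rw [h2, List.nil_append]
      have h3 : (c :: t).filter (fun c => decide (c ≤ T)) = c :: t := by
        apply List.filter_eq_self.mpr
        intro y hy
        rcases List.mem_cons.mp hy with rfl | hy'
        · simp [hcT]
        · have := hct y hy'
          simp only [decide_eq_true_eq]
          omega
      rw [h3]

theorem eq_runD (l : List ℤ) (b : ℤ) (k : ℕ) (hl : ZDec l)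
    (hup : ∀ c ∈ l, c < b + k) (hlo : ∀ c ∈ l, b ≤ c)
    (hmem : ∀ j : ℕ, j < k → b + j ∈ l) : l = runD b k := by
  induction k generalizing l with
  | zero =>
    cases l with
    | nil => rfl
    | cons c t =>
      have h1 := hup c (List.mem_cons_self)
      have h2 := hlo c (List.mem_cons_self)
      simp only [Nat.cast_zero, add_zero] at h1
      omega
  | succ k ih =>
    cases l with
    | nil => exact absurd (hmem k (by omega)) (List.not_mem_nil)
    | cons c t =>
      obtain ⟨hct, ht⟩ := ZDec_cons_iff.mp hl
      have hc : c = b + k := by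
        have hm := hmem k (by omega)
        rcases List.mem_cons.mp hm with h | h
        · omega
        · have h1 := hct _ h
          have h2 := hup c (List.mem_cons_self)
          push_cast at h2
          omega
      have ht' : t = runD b k := by
        refine ih t ht (fun y hy => ?_) (fun y hy => hlo y (List.mem_cons_of_mem _ hy))
          (fun j hj => ?_)
        · have := hct y hy; omega
        · rcases List.mem_cons.mp (hmem j (by omega)) with h | h
          · exfalso; omega
          · exact h
      rw [hc, ht']
      rfl

theorem eq_cons_of_mem_max (l : List ℤ) (hl : ZDec l) (x : ℤ) (hx : x ∈ l)
    (hmax : ∀ c ∈ l, c ≤ x) : l = x :: l.tail := by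
  cases l with
  | nil => simp at hx
  | cons c t =>
    obtain ⟨hct, ht⟩ := ZDec_cons_iff.mp hl
    have h1 : c ≤ x := hmax c (List.mem_cons_self)
    have h2 : x ≤ c := by
      rcases List.mem_cons.mp hx with h | h
      · omega
      · have := hct _ h; omega
    have : c = x := by omega
    rw [this]
    rfl

theorem insertDec_skip (B t : List ℤ) (p : ℤ) (hB : ∀ b ∈ B, p < b) :
    insertDecZ p (B ++ t) = B ++ insertDecZ p t := by
  induction B with
  | nil => rfl
  | cons b B' ih =>
    have hb : ¬ (b < p) := by have := hB b (List.mem_cons_self); omega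
    simp only [List.cons_append, insertDecZ, if_neg hb]
    exact congrArg (b :: ·) (ih fun y hy => hB y (List.mem_cons_of_mem _ hy))

theorem insertDec_here (t : List ℤ) (p : ℤ) (ht : ∀ c ∈ t, c < p) :
    insertDecZ p t = p :: t := by
  cases t with
  | nil => rfl
  | cons c t' =>
    have : c < p := ht c (List.mem_cons_self)
    simp [insertDecZ, this]

theorem length_insertDec (p : ℤ) (l : List ℤ) :
    (insertDecZ p l).length = l.length + 1 := by
  induction l with
  | nil => rfl
  | cons c t ih =>
    simp only [insertDecZ]
    split_ifs
    · simp
    · simp [ih]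

theorem mem_insertDec {y p : ℤ} {l : List ℤ} :
    y ∈ insertDecZ p l ↔ y = p ∨ y ∈ l := by
  induction l with
  | nil => simp [insertDecZ]
  | cons c t ih =>
    simp only [insertDecZ]
    split_ifs
    · exact List.mem_cons
    · simp only [List.mem_cons, ih]; tauto

theorem ZDec_insertDec (l : List ℤ) (hl : ZDec l) (p : ℤ) (hp : p ∉ l) :
    ZDec (insertDecZ p l) := by
  induction l with
  | nil => simp [insertDecZ, ZDec]
  | cons c t ih =>
    obtain ⟨hct, ht⟩ := ZDec_cons_iff.mp hl
    have hpc : p ≠ c := fun h => hp (h ▸ List.mem_cons_self)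
    have hpt : p ∉ t := fun h => hp (List.mem_cons_of_mem _ h)
    simp only [insertDecZ]
    split_ifs with h
    · refine List.pairwise_cons.mpr ⟨?_, hl⟩
      intro y hy
      rcases List.mem_cons.mp hy with rfl | hy'
      · exact h
      · have := hct _ hy'; omega
    · refine List.pairwise_cons.mpr ⟨?_, ih ht hpt⟩
      intro y hy
      rcases mem_insertDec.mp hy with rfl | hy'
      · omega
      · exact hct _ hy'

theorem ZDec_nodup {l : List ℤ} (hl : ZDec l) : l.Nodup :=
  hl.imp fun h => by omega

theorem ZDec_sublist {l₁ l₂ : List ℤ} (h : l₁.Sublist l₂) (hl : ZDec l₂) : ZDec l₁ :=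
  List.Pairwise.sublist h hl

end EZAux

namespace EZAux

/-! ### Pairing fold machinery -/

def pstep (st : List (ℤ × ℤ) × List ℤ) (c : ℤ) : List (ℤ × ℤ) × List ℤ :=
  match findPairZ c st.2 with
  | (none, r) => (st.1, r)
  | (some b, r) => ((b, c) :: st.1, r)

theorem pairsZ_eq (u v : List ℤ) :
    pairsZ u v = (List.foldl pstep ([], u) v.reverse).1 := rfl

theorem pstep_of_none {st : List (ℤ × ℤ) × List ℤ} {c : ℤ} {r : List ℤ}
    (h : findPairZ c st.2 = (none, r)) : pstep st c = (st.1, r) := by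
  simp [pstep, h]

theorem pstep_of_some {st : List (ℤ × ℤ) × List ℤ} {c b : ℤ} {r : List ℤ}
    (h : findPairZ c st.2 = (some b, r)) : pstep st c = ((b, c) :: st.1, r) := by
  simp [pstep, h]

theorem findPair_sublist (c : ℤ) (l : List ℤ) : (findPairZ c l).2.Sublist l := by
  induction l with
  | nil => simp [findPairZ]
  | cons b rest ih =>
    simp only [findPairZ]
    split_ifs
    · exact List.sublist_cons_self b rest
    · exact List.Sublist.cons₂ b ih

theorem findPair_none (c : ℤ) (l : List ℤ) (h : ∀ b ∈ l, ¬ b < c) :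
    findPairZ c l = (none, l) := by
  induction l with
  | nil => rfl
  | cons b rest ih =>
    have hb : ¬ b < c := h b (List.mem_cons_self)
    simp only [findPairZ, if_neg hb]
    rw [ih fun y hy => h y (List.mem_cons_of_mem _ hy)]

theorem findPair_mem_of_not_lt {c y : ℤ} {l : List ℤ} (hy : y ∈ l) (hnl : ¬ y < c) :
    y ∈ (findPairZ c l).2 := by
  induction l with
  | nil => simp at hy
  | cons b rest ih =>
    simp only [findPairZ]
    split_ifs with hb
    · rcases List.mem_cons.mp hy with rfl | h
      · exact absurd hb hnl
      · exact h
    · rcases List.mem_cons.mp hy with rfl | h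
      · exact List.mem_cons_self
      · exact List.mem_cons_of_mem _ (ih h)

theorem findPair_some_of_exists {c : ℤ} {l : List ℤ} (h : ∃ b ∈ l, b < c) :
    ∃ b r, findPairZ c l = (some b, r) := by
  induction l with
  | nil => simp at h
  | cons b rest ih =>
    simp only [findPairZ]
    split_ifs with hb
    · exact ⟨b, rest, rfl⟩
    · obtain ⟨y, hy, hyc⟩ := h
      have hyr : y ∈ rest := by
        rcases List.mem_cons.mp hy with rfl | h'
        · exact absurd hyc hb
        · exact h'
      obtain ⟨b', r', hfp⟩ := ih ⟨y, hyr, hyc⟩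
      rw [hfp]
      exact ⟨b', b :: r', rfl⟩

theorem findPair_remove {c b : ℤ} {l : List ℤ} (hl : ZDec l) (hb : b ∈ l) (hbc : b < c)
    (hmax : ∀ y ∈ l, y < c → y ≤ b) :
    ∃ r, findPairZ c l = (some b, r) ∧ ∀ y : ℤ, (y ∈ r ↔ y ∈ l ∧ y ≠ b) := by
  induction l with
  | nil => simp at hb
  | cons h t ih =>
    obtain ⟨hht, ht⟩ := ZDec_cons_iff.mp hl
    by_cases hhc : h < c
    · have h1 : h ≤ b := hmax h (List.mem_cons_self) hhc
      have h2 : h = b := by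
        rcases List.mem_cons.mp hb with rfl | hbt
        · rfl
        · have := hht _ hbt; omega
      subst h2
      refine ⟨t, by simp [findPairZ, hhc], fun y => ?_⟩
      constructor
      · intro hy
        exact ⟨List.mem_cons_of_mem _ hy, fun hyb => by subst hyb; exact absurd (hht _ hy) (by omega)⟩
      · rintro ⟨hy, hyb⟩
        rcases List.mem_cons.mp hy with rfl | hyt
        · exact absurd rfl hyb
        · exact hyt
    · have hbt : b ∈ t := by
        rcases List.mem_cons.mp hb with rfl | h'
        · exact absurd hbc hhc
        · exact h'
      obtain ⟨r, hfp, hr⟩ := ih ht hbt (fun y hy hyc => hmax y (List.mem_cons_of_mem _ hy) hyc)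
      refine ⟨h :: r, by simp [findPairZ, hhc, hfp], fun y => ?_⟩
      have hhb : h ≠ b := fun he => hhc (he ▸ hbc)
      constructor
      · intro hy
        rcases List.mem_cons.mp hy with rfl | hyr
        · exact ⟨List.mem_cons_self, hhb⟩
        · obtain ⟨h1, h2⟩ := (hr y).mp hyr
          exact ⟨List.mem_cons_of_mem _ h1, h2⟩
      · rintro ⟨hy, hyb⟩
        rcases List.mem_cons.mp hy with rfl | hyt
        · exact List.mem_cons_self
        · exact List.mem_cons_of_mem _ ((hr y).mpr ⟨hyt, hyb⟩)

theorem fold_sublist (pre : List ℤ) (st : List (ℤ × ℤ) × List ℤ) :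
    (List.foldl pstep st pre).2.Sublist st.2 := by
  induction pre generalizing st with
  | nil => simp
  | cons c pre' ih =>
    rw [List.foldl_cons]
    refine (ih (pstep st c)).trans ?_
    rcases hfp : findPairZ c st.2 with ⟨o, r⟩
    cases o with
    | none =>
      rw [pstep_of_none hfp]
      have := findPair_sublist c st.2
      rw [hfp] at this
      exact this
    | some b =>
      rw [pstep_of_some hfp]
      have := findPair_sublist c st.2
      rw [hfp] at this
      exact this

theorem fold_pairs_grow (pre : List ℤ) (st : List (ℤ × ℤ) × List ℤ) {p : ℤ × ℤ}
    (hp : p ∈ st.1) : p ∈ (List.foldl pstep st pre).1 := by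
  induction pre generalizing st with
  | nil => exact hp
  | cons c pre' ih =>
    rw [List.foldl_cons]
    apply ih
    rcases hfp : findPairZ c st.2 with ⟨o, r⟩
    cases o with
    | none => rw [pstep_of_none hfp]; exact hp
    | some b => rw [pstep_of_some hfp]; exact List.mem_cons_of_mem _ hp

theorem fold_survive (pre : List ℤ) (st : List (ℤ × ℤ) × List ℤ) {y : ℤ}
    (hy : y ∈ st.2) (hny : ∀ c ∈ pre, ¬ y < c) : y ∈ (List.foldl pstep st pre).2 := by
  induction pre generalizing st with
  | nil => exact hy
  | cons c pre' ih =>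
    rw [List.foldl_cons]
    refine ih (pstep st c) ?_ (fun d hd => hny d (List.mem_cons_of_mem _ hd))
    have hstep : y ∈ (findPairZ c st.2).2 :=
      findPair_mem_of_not_lt hy (hny c (List.mem_cons_self))
    rcases hfp : findPairZ c st.2 with ⟨o, r⟩
    rw [hfp] at hstep
    cases o with
    | none => rw [pstep_of_none hfp]; exact hstep
    | some b => rw [pstep_of_some hfp]; exact hstep

theorem fold_snd_mem (pre : List ℤ) (st : List (ℤ × ℤ) × List ℤ) {p : ℤ × ℤ}
    (hp : p ∈ (List.foldl pstep st pre).1) : p ∈ st.1 ∨ p.2 ∈ pre := by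
  induction pre generalizing st with
  | nil => exact Or.inl hp
  | cons c pre' ih =>
    rw [List.foldl_cons] at hp
    rcases ih (pstep st c) hp with h | h
    · rcases hfp : findPairZ c st.2 with ⟨o, r⟩
      cases o with
      | none =>
        rw [pstep_of_none hfp] at h
        exact Or.inl h
      | some b =>
        rw [pstep_of_some hfp] at h
        rcases List.mem_cons.mp h with rfl | h'
        · exact Or.inr (List.mem_cons_self)
        · exact Or.inl h'
    · exact Or.inr (List.mem_cons_of_mem _ h)

end EZAux

namespace EZAux

/-! ### Pairing structure lemmas -/

theorem x_in_snd_of_small (u v : List ℤ) (x : ℤ) (pre post : List ℤ)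
    (hrev : v.reverse = pre ++ x :: post)
    (hb : ∃ b ∈ (List.foldl pstep ([], u) pre).2, b < x) :
    x ∈ (pairsZ u v).map Prod.snd := by
  obtain ⟨b', r', hfp⟩ := findPair_some_of_exists hb
  have hps : pstep (List.foldl pstep ([], u) pre) x = ((b', x) :: (List.foldl pstep ([], u) pre).1, r') :=
    pstep_of_some hfp
  rw [pairsZ_eq, hrev, List.foldl_append, List.foldl_cons, hps]
  exact List.mem_map.mpr ⟨(b', x), fold_pairs_grow post _ (List.mem_cons_self), rfl⟩

/-- If `x ∈ v` is unpaired in `pair(u,v)` then `x - 1 ∉ u`. -/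
theorem unpaired_pred_not_mem {u v : List ℤ} (hu : ZDec u) (hv : ZDec v) {x : ℤ}
    (hxv : x ∈ v) (hxup : x ∉ (pairsZ u v).map Prod.snd) : x - 1 ∉ u := by
  intro hmem
  -- split v at x
  have hsplit := split_filter v hv x
  set V₁ := v.filter (fun c => decide (x < c)) with hV₁
  set Vle := v.filter (fun c => decide (c ≤ x)) with hVle
  have hxVle : x ∈ Vle := List.mem_filter.mpr ⟨hxv, by simp⟩
  have hVle_sorted : ZDec Vle := hv.filter _
  have hVle_eq : Vle = x :: Vle.tail := by
    refine eq_cons_of_mem_max Vle hVle_sorted x hxVle fun c hc => ?_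
    have := List.mem_filter.mp hc
    simpa using this.2
  set V₂ := Vle.tail with hV₂
  have hV₂lt : ∀ c ∈ V₂, c < x := by
    intro c hc
    have : List.Pairwise (fun a b => b < a) (x :: V₂) := hVle_eq ▸ hVle_sorted
    exact List.rel_of_pairwise_cons this hc
  have hrev : v.reverse = V₂.reverse ++ x :: V₁.reverse := by
    conv_lhs => rw [hsplit, hVle_eq]
    simp
  have hsurv : x - 1 ∈ (List.foldl pstep ([], u) V₂.reverse).2 := by
    refine fold_survive _ _ hmem fun c hc => ?_
    have := hV₂lt c (List.mem_reverse.mp hc)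
    omega
  exact hxup (x_in_snd_of_small u v x _ _ hrev ⟨x - 1, hsurv, by omega⟩)

/-- The largest unpaired letter `x` of `v` cannot have `x+1, …, x+q+1` all in `v`,
where `q = qUp u x`. -/
theorem no_overrun {u v : List ℤ} (hu : ZDec u) (hv : ZDec v) {x : ℤ} {rest : List ℤ}
    (hfil : v.filter (fun c => decide (c ∉ (pairsZ u v).map Prod.snd)) = x :: rest)
    (hmemv : ∀ i : ℕ, i ≤ qUp u x → x + 1 + (i : ℤ) ∈ v) : False := by
  set q := qUp u x with hq
  -- basic facts about x
  have hxfil : x ∈ v.filter (fun c => decide (c ∉ (pairsZ u v).map Prod.snd)) := by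
    rw [hfil]; exact List.mem_cons_self
  have hxv : x ∈ v := (List.mem_filter.mp hxfil).1
  have hxup : x ∉ (pairsZ u v).map Prod.snd := by
    have := (List.mem_filter.mp hxfil).2
    simpa using this
  have hrest_lt : ∀ c ∈ rest, c < x := by
    intro c hc
    have hs : List.Pairwise (fun a b => b < a) (x :: rest) := hfil ▸ hv.filter _
    exact List.rel_of_pairwise_cons hs hc
  -- decompositions
  have hsplit1 := split_filter v hv (x + (q : ℤ) + 1)
  set D := v.filter (fun c => decide (x + (q : ℤ) + 1 < c)) with hD
  set M2 := v.filter (fun c => decide (c ≤ x + (q : ℤ) + 1)) with hM2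
  have hM2_sorted : ZDec M2 := hv.filter _
  have hsplit2 := split_filter M2 hM2_sorted (x - 1)
  set mid := M2.filter (fun c => decide (x - 1 < c)) with hmid
  set E := M2.filter (fun c => decide (c ≤ x - 1)) with hE
  have hDlt : ∀ c ∈ D, x + (q : ℤ) + 1 < c := by
    intro c hc; have := (List.mem_filter.mp hc).2; simpa using this
  have hElt : ∀ c ∈ E, c ≤ x - 1 := by
    intro c hc; have := (List.mem_filter.mp hc).2; simpa using this
  have hmid_eq : mid = runD x (q + 2) := by
    refine eq_runD mid x (q + 2) (hM2_sorted.filter _) ?_ ?_ ?_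
    · intro c hc
      have h1 := (List.mem_filter.mp ((List.mem_filter.mp hc).1)).2
      simp only [decide_eq_true_eq] at h1
      push_cast
      omega
    · intro c hc
      have h1 := (List.mem_filter.mp hc).2
      simp only [decide_eq_true_eq] at h1
      omega
    · intro j hj
      have hjv : x + (j : ℤ) ∈ v := by
        rcases Nat.eq_zero_or_pos j with rfl | hj0
        · simpa using hxv
        · have := hmemv (j - 1) (by omega)
          have hcast : x + 1 + ((j - 1 : ℕ) : ℤ) = x + (j : ℤ) := by
            push_cast [Nat.cast_sub hj0]; ring
          rwa [hcast] at this
      have hjM2 : x + (j : ℤ) ∈ M2 := by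
        refine List.mem_filter.mpr ⟨hjv, ?_⟩
        simp only [decide_eq_true_eq]
        push_cast at hj ⊢
        omega
      refine List.mem_filter.mpr ⟨hjM2, ?_⟩
      simp only [decide_eq_true_eq]
      omega
  have hrev : v.reverse = E.reverse ++ ((runD x (q + 2)).reverse ++ D.reverse) := by
    conv_lhs => rw [hsplit1, hsplit2, hmid_eq]
    simp
  -- the fold states
  set s₀ := List.foldl pstep ([], u) E.reverse with hs₀
  set T : ℕ → List (ℤ × ℤ) × List ℤ :=
    fun k => List.foldl pstep s₀ ((runD x k).reverse) with hT
  have hT0 : T 0 = s₀ := rfl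
  have hTsucc : ∀ k : ℕ, T (k + 1) = pstep (T k) (x + (k : ℤ)) := by
    intro k
    show List.foldl pstep s₀ ((runD x (k+1)).reverse) = _
    rw [show runD x (k+1) = (x + (k:ℤ)) :: runD x k from rfl, List.reverse_cons,
      List.foldl_append]
    rfl
  have hsub : ∀ k, (T k).2.Sublist u := by
    intro k
    exact (fold_sublist _ _).trans (fold_sublist _ ([], u))
  -- no small element survives to s₀
  have hns : ∀ b ∈ s₀.2, ¬ b < x := by
    intro b hb hlt
    apply hxup
    refine x_in_snd_of_small u v x E.reverse ((runD (x+1) (q+1)).reverse ++ D.reverse) ?_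
      ⟨b, hb, hlt⟩
    rw [hrev, runD_succ_eq x (q + 1)]
    simp
  -- the invariant
  have hInv : ∀ k : ℕ, 1 ≤ k → k ≤ q + 1 → ∀ y : ℤ, (y ∈ (T k).2 ↔ y ∈ u ∧ x + (k:ℤ) ≤ y + 1) := by
    intro k
    induction k with
    | zero => omega
    | succ k ih =>
      intro _ hk1 y
      rcases Nat.eq_zero_or_pos k with rfl | hk0
      · -- base case k+1 = 1
        rw [hTsucc 0, hT0]
        have hnone : findPairZ (x + ((0:ℕ):ℤ)) s₀.2 = (none, s₀.2) := by
          refine findPair_none _ _ fun b hb => ?_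
          have := hns b hb
          push_cast
          omega
        rw [pstep_of_none hnone]
        constructor
        · intro hy
          have hyu : y ∈ u := (hsub 0).mem hy
          have := hns y hy
          push_cast
          exact ⟨hyu, by omega⟩
        · rintro ⟨hyu, hyx⟩
          refine fold_survive _ _ hyu fun c hc => ?_
          have := hElt c (List.mem_reverse.mp hc)
          push_cast at hyx
          omega
      · -- inductive step: 1 ≤ k ≤ q
        have ihk := ih (by omega) (by omega)
        rw [hTsucc k]
        have hrem_sorted : ZDec (T k).2 := ZDec_sublist (hsub k) hu
        have hbu : x + (k:ℤ) - 1 ∈ u := by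
          have := qUp_mem u x (j := k - 1) (by omega)
          have hcast : x + ((k - 1 : ℕ) : ℤ) = x + (k:ℤ) - 1 := by
            push_cast [Nat.cast_sub hk0]; ring
          rwa [hcast] at this
        have hbrem : x + (k:ℤ) - 1 ∈ (T k).2 := (ihk _).mpr ⟨hbu, by omega⟩
        obtain ⟨r, hfp, hr⟩ := findPair_remove (c := x + (k:ℤ)) hrem_sorted hbrem (by omega)
          (fun y hy hyc => by have := (ihk y).mp hy; omega)
        rw [pstep_of_some hfp]
        show y ∈ r ↔ _
        rw [hr y, ihk y]
        push_cast
        constructor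
        · rintro ⟨⟨h1, h2⟩, h3⟩
          exact ⟨h1, by omega⟩
        · rintro ⟨h1, h2⟩
          exact ⟨⟨h1, by omega⟩, by omega⟩
  -- the letter x + q + 1 ends up unpaired
  have hfinal_eq : T (q + 2) = ((T (q + 1)).1, (T (q + 1)).2) := by
    rw [hTsucc (q + 1)]
    have hnone : findPairZ (x + ((q + 1 : ℕ) : ℤ)) (T (q + 1)).2 = (none, (T (q + 1)).2) := by
      refine findPair_none _ _ fun b hb => ?_
      have hb' := (hInv (q + 1) (by omega) (by omega) b).mp hb
      intro hlt
      have hbq : b = x + (q : ℤ) := by push_cast at hb' hlt ⊢; omega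
      exact absurd (hbq ▸ hb'.1) (qUp_not_mem u x)
    rw [pstep_of_none hnone]
  have hpair_decomp : pairsZ u v = (List.foldl pstep (T (q + 2)) D.reverse).1 := by
    rw [pairsZ_eq, hrev, List.foldl_append, List.foldl_append]
  have hxq1_unpaired : x + (q : ℤ) + 1 ∉ (pairsZ u v).map Prod.snd := by
    intro hmem
    obtain ⟨pr, hpr, hpr2⟩ := List.mem_map.mp hmem
    rw [hpair_decomp] at hpr
    rcases fold_snd_mem _ _ hpr with h | h
    · rw [hfinal_eq] at h
      rcases fold_snd_mem _ _ h with h' | h'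
      · rcases fold_snd_mem _ _ h' with h'' | h''
        · simp at h''
        · have := hElt _ (List.mem_reverse.mp h'')
          omega
      · have := mem_runD.mp (List.mem_reverse.mp h')
        push_cast at this
        omega
    · have := hDlt _ (List.mem_reverse.mp h)
      omega
  have hxq1v : x + (q : ℤ) + 1 ∈ v := by
    have := hmemv q (le_refl q)
    have hcast : x + 1 + (q : ℤ) = x + (q : ℤ) + 1 := by ring
    rwa [hcast] at this
  have hxq1fil : x + (q : ℤ) + 1 ∈ v.filter (fun c => decide (c ∉ (pairsZ u v).map Prod.snd)) :=
    List.mem_filter.mpr ⟨hxq1v, by simpa using hxq1_unpaired⟩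
  rw [hfil] at hxq1fil
  rcases List.mem_cons.mp hxq1fil with h | h
  · omega
  · have := hrest_lt _ h
    omega

end EZAux

namespace EZAux

theorem eStep_main {u v : List ℤ} {uv' : List ℤ × List ℤ} (hu : ZDec u) (hv : ZDec v)
    (hred : IsReducedWord (wordProd (u ++ v)) (u ++ v))
    (hstep : eStepZ u v = some uv') :
    ∃ x : ℤ, x ∈ v ∧ uv'.1 = insertDecZ (x + (qUp u x : ℤ)) u ∧ uv'.2 = v.erase x ∧
      x + (qUp u x : ℤ) ∉ u ∧
      wordProd (uv'.1 ++ uv'.2) = wordProd (u ++ v) := by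
  rcases hfl : v.filter (fun c => decide (c ∉ (pairsZ u v).map Prod.snd)) with _ | ⟨x, rest⟩
  · rw [eStepZ, hfl] at hstep; simp at hstep
  rw [eStepZ, hfl] at hstep
  simp only [Option.some.injEq] at hstep
  set q := qUp u x with hqdef
  refine ⟨x, ?_, ?_, ?_, ?_, ?_⟩
  case _ =>
    exact (List.mem_filter.mp (by rw [hfl]; exact List.mem_cons_self)).1
  case _ => rw [← hstep]
  case _ => rw [← hstep]
  case _ => exact qUp_not_mem u x
  -- main work
  have hxfil : x ∈ v.filter (fun c => decide (c ∉ (pairsZ u v).map Prod.snd)) := by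
    rw [hfl]; exact List.mem_cons_self
  have hxv : x ∈ v := (List.mem_filter.mp hxfil).1
  have hxup : x ∉ (pairsZ u v).map Prod.snd := by
    have := (List.mem_filter.mp hxfil).2; simpa using this
  have hP1 : x - 1 ∉ u := unpaired_pred_not_mem hu hv hxv hxup
  set p := qUp v (x + 1) with hpdef
  have hpq : p ≤ q := by
    by_contra hcon
    push_neg at hcon
    exact no_overrun hu hv hfl (fun i hi => qUp_mem v (x + 1) (by omega))
  -- decomposition of v at x
  have hsplitv := split_filter v hv x
  set V₁ := v.filter (fun c => decide (x < c)) with hV₁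
  set Vle := v.filter (fun c => decide (c ≤ x)) with hVle
  have hV₁_sorted : ZDec V₁ := hv.filter _
  have hVle_sorted : ZDec Vle := hv.filter _
  have hxVle : x ∈ Vle := List.mem_filter.mpr ⟨hxv, by simp⟩
  have hVle_eq : Vle = x :: Vle.tail := by
    refine eq_cons_of_mem_max Vle hVle_sorted x hxVle fun c hc => ?_
    have := List.mem_filter.mp hc
    simpa using this.2
  set V₂ := Vle.tail with hV₂
  have hvdec : v = V₁ ++ x :: V₂ := by rw [hsplitv, hVle_eq]
  have hV₁mem : ∀ y : ℤ, y ∈ V₁ → y ∈ v ∧ x < y := by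
    intro y hy
    have := List.mem_filter.mp hy
    exact ⟨this.1, by simpa using this.2⟩
  have hxnV₁ : x ∉ V₁ := fun h => by have := (hV₁mem x h).2; omega
  -- evaluations on V₁
  have hσx : wordProd V₁ x = x := by
    refine evalFix V₁ hV₁_sorted x hxnV₁ fun h => ?_
    have := (hV₁mem _ h).2; omega
  have hσx1 : wordProd V₁ (x + 1) = x + 1 + (p : ℤ) := by
    refine evalUp V₁ hV₁_sorted (x + 1) p (fun j hj => ?_) (fun h => ?_) (by simpa using hxnV₁)
    · exact List.mem_filter.mpr ⟨qUp_mem v (x+1) hj, by simp; omega⟩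
    · exact absurd (hV₁mem _ h).1 (qUp_not_mem v (x + 1))
  -- evaluations on u
  have hUx : wordProd u x = x + (q : ℤ) :=
    evalUp u hu x q (fun j hj => qUp_mem u x hj) (qUp_not_mem u x) hP1
  -- q ≤ p from reducedness
  have hqp : q ≤ p := by
    by_contra hcon
    push_neg at hcon
    have harr : u ++ v = ([] ++ ((u ++ V₁) ++ [x])) ++ V₂ := by rw [hvdec]; simp
    have hred' := hred
    rw [harr] at hred'
    have hredm := reduced_infix (l₁ := []) (m := (u ++ V₁) ++ [x]) (l₂ := V₂) hred'
    have hcrit := reduced_snoc hredm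
    rw [wordProd_append, Equiv.Perm.mul_apply, Equiv.Perm.mul_apply, hσx, hσx1, hUx] at hcrit
    have hdown : wordProd u (x + 1 + (p : ℤ)) = x + (p : ℤ) := by
      have hm : x + 1 + (p : ℤ) - 1 ∈ u := by
        rw [show x + 1 + (p:ℤ) - 1 = x + (p:ℤ) by ring]
        exact qUp_mem u x hcon
      exact (evalDown u hu _ hm).trans (by ring)
    rw [hdown] at hcrit
    omega
  have hpq_eq : p = q := le_antisymm hpq hqp
  -- decomposition of u
  have hsplitu := split_filter u hu (x + (q : ℤ) - 1)
  set B := u.filter (fun c => decide (x + (q : ℤ) - 1 < c)) with hB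
  set M := u.filter (fun c => decide (c ≤ x + (q : ℤ) - 1)) with hM
  have hM_sorted : ZDec M := hu.filter _
  have hsplitM := split_filter M hM_sorted (x - 1)
  set Rl := M.filter (fun c => decide (x - 1 < c)) with hRl
  set C := M.filter (fun c => decide (c ≤ x - 1)) with hC
  have hC_sorted : ZDec C := hM_sorted.filter _
  have hBgt : ∀ b ∈ B, x + (q : ℤ) < b := by
    intro b hb
    have h1 := List.mem_filter.mp hb
    have h2 : b ∈ u := h1.1
    have h3 : x + (q:ℤ) - 1 < b := by simpa using h1.2
    have h4 : b ≠ x + (q:ℤ) := fun he => absurd (he ▸ h2) (qUp_not_mem u x)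
    omega
  have hCle : ∀ c ∈ C, c ≤ x - 2 := by
    intro c hc
    have h1 := List.mem_filter.mp hc
    have h2 : c ≤ x - 1 := by simpa using h1.2
    have h3 : c ∈ u := (List.mem_filter.mp h1.1).1
    have h4 : c ≠ x - 1 := fun he => absurd (he ▸ h3) hP1
    omega
  have hRleq : Rl = runD x q := by
    refine eq_runD Rl x q (hM_sorted.filter _) ?_ ?_ ?_
    · intro c hc
      have h1 := List.mem_filter.mp hc
      have h2 := List.mem_filter.mp h1.1
      have h3 : c ≤ x + (q:ℤ) - 1 := by simpa using h2.2
      omega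
    · intro c hc
      have h1 := List.mem_filter.mp hc
      have h2 : x - 1 < c := by simpa using h1.2
      omega
    · intro j hj
      have h1 : x + (j:ℤ) ∈ u := qUp_mem u x hj
      have h2 : x + (j:ℤ) ∈ M := by
        refine List.mem_filter.mpr ⟨h1, ?_⟩
        simp only [decide_eq_true_eq]
        omega
      refine List.mem_filter.mpr ⟨h2, ?_⟩
      simp only [decide_eq_true_eq]
      omega
  have hudec : u = B ++ (runD x q ++ C) := by
    rw [hsplitu, hsplitM, hRleq]
  -- forms of u' and v'
  have hu' : insertDecZ (x + (q:ℤ)) u = B ++ (x + (q:ℤ)) :: (runD x q ++ C) := by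
    conv_lhs => rw [hudec]
    rw [insertDec_skip _ _ _ hBgt, insertDec_here]
    intro c hc
    rcases List.mem_append.mp hc with h | h
    · have := mem_runD.mp h; omega
    · have := hCle c h; omega
  have hv'e : v.erase x = V₁ ++ V₂ := by
    conv_lhs => rw [hvdec]
    rw [List.erase_append_right _ hxnV₁, List.erase_cons_head]
  -- the key permutations
  set σp := wordProd V₁ with hσp
  set Cp := wordProd C with hCp
  set Rp := wordProd (runD x q) with hRp
  set Bp := wordProd B with hBp
  set Wp := wordProd V₂ with hWp
  have hCx : Cp x = x := by
    refine evalFix C hC_sorted x (fun h => ?_) (fun h => ?_)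
    · have := hCle _ h; omega
    · have := hCle _ h; omega
  have hRx : Rp x = x + (q:ℤ) := by
    refine evalUp _ (ZDec_runD x q) x q (fun j hj => mem_runD.mpr ⟨by omega, by push_cast; omega⟩)
      (fun h => ?_) (fun h => ?_)
    · have := mem_runD.mp h; omega
    · have := mem_runD.mp h; omega
  have hCx1 : Cp (x + (q:ℤ) + 1) = x + (q:ℤ) + 1 := by
    refine evalFix C hC_sorted _ (fun h => ?_) (fun h => ?_)
    · have := hCle _ h; omega
    · have := hCle _ h; omega
  have hRx1 : Rp (x + (q:ℤ) + 1) = x + (q:ℤ) + 1 := by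
    refine evalFix _ (ZDec_runD x q) _ (fun h => ?_) (fun h => ?_)
    · have := mem_runD.mp h; omega
    · have := mem_runD.mp h; omega
  have hσx1' : σp (x + 1) = x + (q:ℤ) + 1 := by
    rw [hσp, hσx1, hpq_eq]; ring
  set P := Rp * Cp * σp with hP
  have hPx : P x = x + (q:ℤ) := by
    rw [hP, Equiv.Perm.mul_apply, Equiv.Perm.mul_apply, hσx, hCx, hRx]
  have hPx1 : P (x + 1) = x + (q:ℤ) + 1 := by
    rw [hP, Equiv.Perm.mul_apply, Equiv.Perm.mul_apply, hσx1', hCx1, hRx1]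
  have hkey : sT (x + (q:ℤ)) * P = P * sT x := by
    have hconj := Equiv.swap_apply_apply P x (x + 1)
    rw [hPx, hPx1] at hconj
    have hsTeq : sT (x + (q:ℤ)) = P * sT x * P⁻¹ := hconj
    rw [hsTeq, inv_mul_cancel_right]
  -- final computation
  have e1 : wordProd (u ++ v) = Bp * (Rp * (Cp * (σp * (sT x * Wp)))) := by
    conv_lhs => rw [hudec, hvdec]
    simp only [wordProd_append, wordProd_cons, mul_assoc, hσp, hCp, hRp, hBp, hWp]
  have e2 : wordProd (insertDecZ (x + (q:ℤ)) u ++ v.erase x) =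
      Bp * (sT (x + (q:ℤ)) * (Rp * (Cp * (σp * Wp)))) := by
    rw [hu', hv'e]
    simp only [wordProd_append, wordProd_cons, mul_assoc, hσp, hCp, hRp, hBp, hWp]
  have hkey2 : sT (x + (q:ℤ)) * (Rp * (Cp * (σp * Wp))) = Rp * (Cp * (σp * (sT x * Wp))) := by
    have := congrArg (· * Wp) hkey
    simpa [hP, mul_assoc] using this
  rw [← hstep]
  rw [e2, hkey2, e1]

end EZAux

namespace EZAux

theorem concat_split (aF : ℕ → List ℤ) {n i : ℕ} (h : i + 1 < n) :
    concatZ aF n =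
      (((List.range i).map aF).flatten ++ (aF i ++ aF (i + 1))) ++
        ((List.range (n - (i + 2))).map (fun k => aF (i + 2 + k))).flatten := by
  have h1 : List.range (i + 2) = List.range i ++ [i, i + 1] := by
    rw [List.range_succ, List.range_succ]
    simp
  have h2 : List.range n = List.range (i + 2) ++
      (List.range (n - (i + 2))).map (fun k => (i + 2) + k) := by
    rw [← List.range_add]
    congr 1
    omega
  rw [concatZ, h2, h1]
  simp only [List.map_append, List.map_map, List.flatten_append, List.map_cons, List.map_nil,
    List.flatten_cons, List.flatten_nil, List.append_assoc, List.append_nil]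
  rfl

end EZAux

theorem eZ_preserves_bounded (n : ℕ) (hn : 0 < n) (w : Equiv.Perm ℤ) (hw : w ∈ SinftySet)
    (φ : ℤ → ℤ) (hmono : Monotone φ) (hflag : ∀ m : ℤ, 1 ≤ m → m ≤ φ m)
    (a : ℕ → List ℤ) (haRF : a ∈ RFposZn n w)
    (hbd : ∀ m : ℕ, ∀ x ∈ a m, (m : ℤ) + 1 ≤ φ x)
    (i : ℕ) (hi : i + 1 < n) (b : ℕ → List ℤ) (hab : eZ i a = some b) :
    b ∈ RFposZn n w ∧ ∀ m : ℕ, ∀ x ∈ b m, (m : ℤ) + 1 ≤ φ x := by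
  open EZAux in
  obtain ⟨hZ, hpos, hempty, hredword⟩ := haRF
  -- unpack the crystal operator
  rw [eZ, applyAtZ, Option.map_eq_some_iff] at hab
  obtain ⟨uv', hstep, hbdef⟩ := hab
  have hbi : b i = uv'.1 := by
    rw [← hbdef, Function.update_of_ne (by omega : i ≠ i + 1), Function.update_self]
  have hbi1 : b (i + 1) = uv'.2 := by
    rw [← hbdef, Function.update_self]
  have hbother : ∀ j, j ≠ i → j ≠ i + 1 → b j = a j := by
    intro j hj1 hj2
    rw [← hbdef, Function.update_of_ne hj2, Function.update_of_ne hj1]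
  -- concatenation decompositions
  have hca := EZAux.concat_split a hi
  have hcb := EZAux.concat_split b hi
  have hmap1 : (List.range i).map b = (List.range i).map a := by
    apply List.map_congr_left
    intro j hj
    have := List.mem_range.mp hj
    exact hbother j (by omega) (by omega)
  have hmap2 : (List.range (n - (i + 2))).map (fun k => b (i + 2 + k)) =
      (List.range (n - (i + 2))).map (fun k => a (i + 2 + k)) := by
    apply List.map_congr_left
    intro j _
    exact hbother _ (by omega) (by omega)
  rw [hmap1, hmap2, hbi, hbi1] at hcb
  -- reducedness of the two middle factors
  have hred0 := hredword
  rw [hca] at hred0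
  have hredm : IsReducedWord (wordProd (a i ++ a (i + 1))) (a i ++ a (i + 1)) :=
    EZAux.reduced_infix (l₁ := ((List.range i).map a).flatten)
      (m := a i ++ a (i + 1)) (l₂ := ((List.range (n - (i + 2))).map
        (fun k => a (i + 2 + k))).flatten) hred0
  -- the main structural lemma
  obtain ⟨x, hxv, h1, h2, hnotmem, hprod⟩ :=
    EZAux.eStep_main (hZ i) (hZ (i + 1)) hredm hstep
  have hq0 : (0 : ℤ) ≤ (qUp (a i) x : ℤ) := by positivity
  have hx1 : 1 ≤ x := hpos (i + 1) x hxv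
  -- length equality of the middle parts
  have hlen_mid : (uv'.1 ++ uv'.2).length = (a i ++ a (i + 1)).length := by
    have hvlen : 0 < (a (i + 1)).length := List.length_pos_of_mem hxv
    rw [h1, h2]
    simp only [List.length_append, EZAux.length_insertDec, List.length_erase_of_mem hxv]
    omega
  -- total word equalities
  have hprod_full : wordProd (concatZ b n) = wordProd (concatZ a n) := by
    rw [hca, hcb]
    simp only [EZAux.wordProd_append]
    rw [show wordProd uv'.1 * wordProd uv'.2 = wordProd uv'.1 * wordProd uv'.2 from rfl]
    have := hprod
    rw [EZAux.wordProd_append, EZAux.wordProd_append] at this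
    rw [this]
  have hlen_full : (concatZ b n).length = (concatZ a n).length := by
    rw [hca, hcb]
    simp only [List.length_append] at hlen_mid ⊢
    omega
  refine ⟨⟨?_, ?_, ?_, ?_⟩, ?_⟩
  · -- each factor decreasing
    intro j
    by_cases hj1 : j = i
    · subst hj1
      rw [hbi, h1]
      exact EZAux.ZDec_insertDec (a j) (hZ j) _ hnotmem
    by_cases hj2 : j = i + 1
    · subst hj2
      rw [hbi1, h2]
      exact EZAux.ZDec_sublist (List.erase_sublist) (hZ (i + 1))
    · rw [hbother j hj1 hj2]; exact hZ j
  · -- positivity of letters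
    intro j y hy
    by_cases hj1 : j = i
    · subst hj1
      rw [hbi, h1] at hy
      rcases EZAux.mem_insertDec.mp hy with rfl | hy'
      · omega
      · exact hpos j y hy'
    by_cases hj2 : j = i + 1
    · subst hj2
      rw [hbi1, h2] at hy
      exact hpos (i + 1) y ((List.erase_sublist).subset hy)
    · rw [hbother j hj1 hj2] at hy; exact hpos j y hy
  · -- factors beyond n empty
    intro m hm
    rw [hbother m (by omega) (by omega)]
    exact hempty m hm
  · -- reduced word for w
    refine ⟨by rw [hprod_full]; exact hredword.1, fun m hm => ?_⟩
    rw [hlen_full]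
    exact hredword.2 m hm
  · -- bounds
    intro m y hy
    by_cases hj1 : m = i
    · subst hj1
      rw [hbi, h1] at hy
      rcases EZAux.mem_insertDec.mp hy with rfl | hy'
      · have hb1 : ((m + 1 : ℕ) : ℤ) + 1 ≤ φ x := hbd (m + 1) x hxv
        have hb2 : φ x ≤ φ (x + (qUp (a m) x : ℤ)) := hmono (by omega)
        push_cast at hb1
        omega
      · exact hbd m y hy'
    by_cases hj2 : m = i + 1
    · subst hj2
      rw [hbi1, h2] at hy
      exact hbd (i + 1) y ((List.erase_sublist).subset hy)
    · rw [hbother m hj1 hj2] at hy; exact hbd m y hy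
end

section
/- Let B be a gl_n-crystal (a set with weight function wt taking values in N^n and crystal operators e_i for i in {1,...,n-1} satisfying wt(e_i b) = wt(b) + e_i - e_{i+1} whenever e_i b is nonzero, where e_i denotes the i-th standard basis vector). For a subset X of B and 0 <= k <= n, define R_k X := { b in X : wt(b)_i = 0 for all k < i <= n }, and for i in {1,...,n-1} define the crystal Demazure operator D_i X := { b in B : e_i^m(b) lies in X for some m in N }. Then for every i in {1,...,n-1}: if i < k then R_k(D_i X) = D_i(R_k X), and if i >= k then R_k(D_i X) = R_k X. -/
open MvPolynomial

/-- `R_k X = {b ∈ X : wt(b)_i = 0 for all k < i ≤ n}`. -/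
def RkSet {B : Type*} (n : ℕ) (wt : B → ℕ → ℕ) (k : ℕ) (Xs : Set B) : Set B :=
  {b | b ∈ Xs ∧ ∀ j : ℕ, k < j → j ≤ n → wt b j = 0}

/-- The crystal Demazure operator `𝔇_i X = {b : e_i^m(b) ∈ X for some m ∈ ℕ}`. -/
def DiSet {B : Type*} (e : ℕ → B → Option B) (i : ℕ) (Xs : Set B) : Set B :=
  {b | ∃ m : ℕ, ∃ b', iterOpt (e i) m b = some b' ∧ b' ∈ Xs}

/-- In a `gl_n`-crystal, for `0 ≤ k ≤ n` and `i ∈ {1, …, n-1}`: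
`R_k 𝔇_i X = 𝔇_i R_k X` if `i < k`, and `R_k 𝔇_i X = R_k X` if `i ≥ k`. -/
theorem Rk_DemazureOp {B : Type*} (n : ℕ) (hn : 0 < n)
    (wt : B → ℕ → ℕ) (e : ℕ → B → Option B)
    (hwt : ∀ i : ℕ, 1 ≤ i → i < n → ∀ b b' : B, e i b = some b' →
      wt b' i = wt b i + 1 ∧ wt b (i + 1) = wt b' (i + 1) + 1 ∧
      ∀ j : ℕ, j ≠ i → j ≠ i + 1 → wt b' j = wt b j)
    (Xs : Set B) (k : ℕ) (hk : k ≤ n) (i : ℕ) (hi1 : 1 ≤ i) (hi2 : i < n) :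
    (i < k → RkSet n wt k (DiSet e i Xs) = DiSet e i (RkSet n wt k Xs)) ∧
    (k ≤ i → RkSet n wt k (DiSet e i Xs) = RkSet n wt k Xs) := by
  have key : ∀ m (b b' : B), iterOpt (e i) m b = some b' →
      ∀ j, j ≠ i → j ≠ i + 1 → wt b' j = wt b j := by
    intro m
    induction m with
    | zero =>
      intro b b' h j _ _
      simp only [iterOpt, Option.some_inj] at h
      subst h; rfl
    | succ m ih =>
      intro b b' h j hj1 hj2
      simp only [iterOpt, Option.bind_eq_some_iff] at h
      obtain ⟨c, hc, hcb⟩ := h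
      rw [ih c b' hcb j hj1 hj2, (hwt i hi1 hi2 b c hc).2.2 j hj1 hj2]
  constructor
  · intro hik
    ext b
    constructor
    · rintro ⟨⟨m, b', hb', hbX⟩, hz⟩
      refine ⟨m, b', hb', hbX, fun j hj1 hj2 => ?_⟩
      rw [key m b b' hb' j (by omega) (by omega)]
      exact hz j hj1 hj2
    · rintro ⟨m, b', hb', hbX, hz⟩
      refine ⟨⟨m, b', hb', hbX⟩, fun j hj1 hj2 => ?_⟩
      rw [← key m b b' hb' j (by omega) (by omega)]
      exact hz j hj1 hj2
  · intro hki
    ext b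
    constructor
    · rintro ⟨⟨m, b', hb', hbX⟩, hz⟩
      cases m with
      | zero =>
        simp only [iterOpt, Option.some_inj] at hb'
        subst hb'; exact ⟨hbX, hz⟩
      | succ m =>
        exfalso
        simp only [iterOpt, Option.bind_eq_some_iff] at hb'
        obtain ⟨c, hc, _⟩ := hb'
        have h1 := (hwt i hi1 hi2 b c hc).2.1
        have h0 := hz (i + 1) (by omega) (by omega)
        omega
    · rintro ⟨hbX, hz⟩
      exact ⟨⟨0, b, rfl, hbX⟩, hz⟩
end
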